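/- arXiv:1812.09129 — 5 statements merged into one kernel-verified Lean document; each statement's English description precedes it below -/
import Mathlib

section
/- Let n be a natural number and let f : ℍ → ℍ be S-polyregular of level n in decomposed form, f(q) = ∑_{k=0}^{n} q̄^k·φ_k(q) with each φ_k entire slice regular. Then for every I ∈ 𝕊 and all x, y ∈ ℝ, writing q = x + I·y and g_I(x,y) = f(x + I·y), one has f(q) = φ_0(q) + ∑_{j=1}^{n} ∑_{k=0}^{n−j} (−1)^k · (q̄^{j+k}/(j!·k!)) · ((∂̄_I)^{j+k} g_I)(x,y), where ∂̄_I h := (1/2)(∂h/∂x + I·(∂h/∂y)) with I multiplying on the left. -/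
open scoped Quaternion
open MeasureTheory

noncomputable section


lemma abs_fst_le (p : ℝ × ℝ) : |p.1| ≤ ‖p‖ := by simpa using norm_fst_le p
lemma abs_snd_le (p : ℝ × ℝ) : |p.2| ≤ ‖p‖ := by simpa using norm_snd_le p

/-- The real-linear embedding of `ℝ²` into `ℍ` via `(x,y) ↦ x + I y`. -/
def sliceCLM (I : ℍ[ℝ]) : ℝ × ℝ →L[ℝ] ℍ[ℝ] :=
  LinearMap.mkContinuousOfExistsBound
    { toFun := fun p => (p.1 : ℍ[ℝ]) + I * (p.2 : ℍ[ℝ])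
      map_add' := by
        intro p q
        simp only [Prod.fst_add, Prod.snd_add]
        push_cast
        rw [mul_add]
        abel
      map_smul' := by
        intro c p
        simp only [Prod.smul_fst, Prod.smul_snd, smul_eq_mul, RingHom.id_apply, smul_add]
        push_cast
        rw [Algebra.smul_def, Algebra.smul_def]
        simp only [Quaternion.algebraMap_def]
        rw [← mul_assoc, ← (Quaternion.coe_commute c I).eq, mul_assoc] }
    ⟨1 + ‖I‖, by
      intro p
      calc ‖(p.1 : ℍ[ℝ]) + I * (p.2 : ℍ[ℝ])‖ ≤ ‖(p.1 : ℍ[ℝ])‖ + ‖I‖ * ‖(p.2 : ℍ[ℝ])‖ := by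
            refine (norm_add_le _ _).trans ?_
            gcongr
            exact norm_mul_le _ _
        _ ≤ ‖p‖ + ‖I‖ * ‖p‖ := by
            rw [Quaternion.norm_coe, Quaternion.norm_coe]
            gcongr <;> [exact abs_fst_le p; exact abs_snd_le p]
        _ = (1 + ‖I‖) * ‖p‖ := by ring⟩

@[simp] lemma sliceCLM_apply (I : ℍ[ℝ]) (p : ℝ × ℝ) :
    sliceCLM I p = (p.1 : ℍ[ℝ]) + I * (p.2 : ℍ[ℝ]) := rfl

lemma sliceCLM_norm_le (I : ℍ[ℝ]) (p : ℝ × ℝ) : ‖sliceCLM I p‖ ≤ (1 + ‖I‖) * ‖p‖ := by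
  calc ‖sliceCLM I p‖ ≤ ‖(p.1 : ℍ[ℝ])‖ + ‖I‖ * ‖(p.2 : ℍ[ℝ])‖ := by
        refine (norm_add_le _ _).trans ?_; gcongr; exact norm_mul_le _ _
    _ ≤ ‖p‖ + ‖I‖ * ‖p‖ := by
        rw [Quaternion.norm_coe, Quaternion.norm_coe]
        gcongr <;> [exact abs_fst_le p; exact abs_snd_le p]
    _ = (1 + ‖I‖) * ‖p‖ := by ring

/-- Elements of a slice commute. -/
lemma slice_commute (I : ℍ[ℝ]) (x y u v : ℝ) :
    Commute ((x : ℍ[ℝ]) + I * y) ((u : ℍ[ℝ]) + I * v) := by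
  apply Commute.add_left
  · exact Quaternion.coe_commute x _
  · apply Commute.add_right
    · exact (Quaternion.coe_commute u _).symm
    · exact Commute.mul_left ((Commute.refl I).mul_right (Quaternion.coe_commute v I).symm)
        (Quaternion.coe_commute y _)

lemma sliceCLM_commute (I : ℍ[ℝ]) (p q : ℝ × ℝ) :
    Commute (sliceCLM I p) (sliceCLM I q) := slice_commute I _ _ _ _

lemma sliceCLM_commute' (I : ℍ[ℝ]) (p q : ℝ × ℝ) :
    Commute (sliceCLM (-I) p) (sliceCLM I q) := by
  have := slice_commute I p.1 (-p.2) q.1 q.2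
  simpa [mul_neg, neg_mul] using this

lemma I_commute_slice (I : ℍ[ℝ]) (p : ℝ × ℝ) : Commute I (sliceCLM I p) := by
  simp only [sliceCLM_apply]
  exact Commute.add_right (Quaternion.coe_commute p.1 I).symm
    ((Commute.refl I).mul_right (Quaternion.coe_commute p.2 I).symm)

lemma I_commute_slice' (I : ℍ[ℝ]) (p : ℝ × ℝ) : Commute I (sliceCLM (-I) p) := by
  have := I_commute_slice I (p.1, -p.2)
  simpa [mul_neg, neg_mul] using this


lemma re_of_sq (I : ℍ[ℝ]) (hI : I * I = -1) : I.re = 0 := by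
  have h1 := congrArg QuaternionAlgebra.re hI
  have h2 := congrArg QuaternionAlgebra.imI hI
  have h3 := congrArg QuaternionAlgebra.imJ hI
  have h4 := congrArg QuaternionAlgebra.imK hI
  simp [Quaternion.re_mul, Quaternion.imI_mul, Quaternion.imJ_mul, Quaternion.imK_mul]
    at h1 h2 h3 h4
  nlinarith [sq_nonneg I.re, sq_nonneg I.imI, sq_nonneg I.imJ, sq_nonneg I.imK]

lemma star_I (I : ℍ[ℝ]) (hI : I * I = -1) : star I = -I :=
  Quaternion.star_eq_neg.mpr (re_of_sq I hI)

lemma star_slice (I : ℍ[ℝ]) (hI : I * I = -1) (p : ℝ × ℝ) :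
    star (sliceCLM I p) = sliceCLM (-I) p := by
  simp only [sliceCLM_apply]
  rw [star_add, star_mul, star_I I hI, Quaternion.star_coe, Quaternion.star_coe,
    (Quaternion.coe_commute p.2 (-I)).eq]
def BL (I : ℍ[ℝ]) : ℍ[ℝ] →L[ℝ] (ℝ × ℝ →L[ℝ] ℍ[ℝ]) :=
  ((ContinuousLinearMap.compL ℝ (ℝ × ℝ) ℍ[ℝ] ℍ[ℝ]).flip (sliceCLM I)).comp
    (ContinuousLinearMap.mul ℝ ℍ[ℝ]).flip

@[simp] lemma BL_apply (I : ℍ[ℝ]) (c : ℍ[ℝ]) (v : ℝ × ℝ) :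
    BL I c v = sliceCLM I v * c := rfl

lemma summable_mul_pow {a : ℕ → ℍ[ℝ]} (h : ∀ r : ℝ, 0 < r → Summable fun j => ‖a j‖ * r ^ j)
    (r : ℝ) (hr : 0 < r) : Summable fun j : ℕ => (j : ℝ) * ‖a j‖ * r ^ j := by
  refine Summable.of_nonneg_of_le (fun j : ℕ => ?_) (fun j : ℕ => ?_) (h (2 * r) (by linarith))
  · positivity
  · have hj : (j : ℝ) ≤ 2 ^ j := by exact_mod_cast (Nat.lt_two_pow_self (n := j)).le
    calc (j : ℝ) * ‖a j‖ * r ^ j ≤ 2 ^ j * ‖a j‖ * r ^ j := by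
          have h0 : (0:ℝ) ≤ ‖a j‖ * r ^ j := by positivity
          nlinarith
      _ = ‖a j‖ * (2 * r) ^ j := by rw [mul_pow]; ring

lemma hasFDerivAt_slice_pow (I : ℍ[ℝ]) (n : ℕ) (p : ℝ × ℝ) :
    HasFDerivAt (fun p => (sliceCLM I p) ^ (n + 1))
      (((n : ℝ) + 1) • BL I ((sliceCLM I p) ^ n)) p := by
  induction n with
  | zero =>
    have e : (fun p : ℝ × ℝ => (sliceCLM I p) ^ (0 + 1)) = fun p => sliceCLM I p := by
      funext q; rw [pow_one]
    have e2 : (((0:ℕ) : ℝ) + 1) • BL I ((sliceCLM I p) ^ 0) = sliceCLM I := by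
      refine ContinuousLinearMap.ext fun v => ?_; simp
    rw [e, e2]
    exact (sliceCLM I).hasFDerivAt
  | succ n ih =>
    have h := ih.mul' (sliceCLM I).hasFDerivAt
    have e : (fun q : ℝ × ℝ => (sliceCLM I q) ^ (n + 1 + 1)) =
        fun q => (sliceCLM I q) ^ (n + 1) * sliceCLM I q := by
      funext q; rw [pow_succ]
    rw [e]
    refine h.congr_fderiv ?_
    refine ContinuousLinearMap.ext fun v => ?_
    simp only [ContinuousLinearMap.add_apply, ContinuousLinearMap.smul_apply, BL_apply,
      ContinuousLinearMap.smulRight_apply, ContinuousLinearMap.coe_coe, smul_eq_mul,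
        op_smul_eq_mul]
    rw [smul_mul_assoc, mul_assoc, ← pow_succ, ((sliceCLM_commute I p v).pow_left (n+1)).eq]
    push_cast
    rw [add_smul, one_smul, add_comm]
    module

/-- `φ : ℍ → ℍ` is entire slice regular. -/
def EntireSliceRegular (φ : ℍ[ℝ] → ℍ[ℝ]) : Prop :=
  ∃ a : ℕ → ℍ[ℝ],
    (∀ r : ℝ, 0 < r → Summable fun j => ‖a j‖ * r ^ j) ∧
    ∀ q : ℍ[ℝ], HasSum (fun j => q ^ j * a j) (φ q)

lemma esr_hasFDerivAt {I : ℍ[ℝ]} {φ : ℍ[ℝ] → ℍ[ℝ]} (h : EntireSliceRegular φ) :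
    ∃ φ' : ℍ[ℝ] → ℍ[ℝ], EntireSliceRegular φ' ∧
      ∀ p : ℝ × ℝ, HasFDerivAt (fun p => φ (sliceCLM I p)) (BL I (φ' (sliceCLM I p))) p := by
  classical
  obtain ⟨a, hs, hφ⟩ := h
  set a' : ℕ → ℍ[ℝ] := fun j => ((j : ℝ) + 1) • a (j + 1) with ha'
  have hs' : ∀ r : ℝ, 0 < r → Summable fun j : ℕ => ‖a' j‖ * r ^ j := by
    intro r hr
    have h1 : Summable fun j : ℕ => ((j + 1 : ℕ) : ℝ) * ‖a (j + 1)‖ * r ^ (j + 1) :=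
      (_root_.summable_nat_add_iff (f := fun j : ℕ => (j : ℝ) * ‖a j‖ * r ^ j) 1).2
        (summable_mul_pow hs r hr)
    have h2 := h1.mul_left (1 / r)
    refine h2.congr fun j => ?_
    have hn : ‖a' j‖ = ((j : ℝ) + 1) * ‖a (j + 1)‖ := by
      rw [ha']
      simp only [norm_smul, Real.norm_eq_abs]
      rw [abs_of_nonneg (by positivity : (0:ℝ) ≤ (j : ℝ) + 1)]
    rw [hn]
    push_cast
    field_simp
    ring
  set φ' : ℍ[ℝ] → ℍ[ℝ] := fun q => ∑' j, q ^ j * a' j with hφ'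
  have hsum' : ∀ q : ℍ[ℝ], Summable fun j : ℕ => q ^ j * a' j := by
    intro q
    refine Summable.of_norm_bounded (g := fun j : ℕ => ‖a' j‖ * (‖q‖ + 1) ^ j)
      (hs' (‖q‖ + 1) (by positivity)) fun j => ?_
    calc ‖q ^ j * a' j‖ ≤ ‖q ^ j‖ * ‖a' j‖ := norm_mul_le _ _
      _ = ‖q‖ ^ j * ‖a' j‖ := by rw [norm_pow]
      _ ≤ (‖q‖ + 1) ^ j * ‖a' j‖ := by gcongr; linarith
      _ = ‖a' j‖ * (‖q‖ + 1) ^ j := by ring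
  refine ⟨φ', ⟨a', hs', fun q => (hsum' q).hasSum⟩, ?_⟩
  intro p₀
  -- setup for the series of derivatives
  set C : ℝ := 1 + ‖I‖ with hC
  have hC1 : (1:ℝ) ≤ C := le_add_of_nonneg_right (norm_nonneg I)
  set R : ℝ := ‖p₀‖ + 1 with hR
  have hR0 : (0:ℝ) < R := by positivity
  set ρ : ℝ := 1 + C * R with hρ
  have hρ1 : (1:ℝ) ≤ ρ := by nlinarith
  have hρ0 : (0:ℝ) < ρ := by linarith
  have hq_bound : ∀ x : ℝ × ℝ, x ∈ Metric.ball (0 : ℝ × ℝ) R → ‖sliceCLM I x‖ ≤ ρ := by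
    intro x hx
    rw [Metric.mem_ball, dist_zero_right] at hx
    calc ‖sliceCLM I x‖ ≤ C * ‖x‖ := sliceCLM_norm_le I x
      _ ≤ C * R := by gcongr
      _ ≤ ρ := by linarith
  set fn : ℕ → (ℝ × ℝ) → ℍ[ℝ] := fun n p => (sliceCLM I p) ^ n * a n with hfn
  set fn' : ℕ → (ℝ × ℝ) → ((ℝ × ℝ) →L[ℝ] ℍ[ℝ]) :=
    fun n p => BL I ((n : ℝ) • ((sliceCLM I p) ^ (n - 1) * a n)) with hfn'
  have hderiv : ∀ (n : ℕ) (x : ℝ × ℝ), HasFDerivAt (fn n) (fn' n x) x := by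
    intro n x
    match n with
    | 0 =>
      have e : fn 0 = fun _ => a 0 := by funext p; simp [hfn]
      have e2 : fn' 0 x = 0 := by
        rw [hfn']
        simp only [Nat.cast_zero, zero_smul, map_zero]
      rw [e, e2]
      exact hasFDerivAt_const _ _
    | (m + 1) =>
      have h1 := (hasFDerivAt_slice_pow I m x).mul' (hasFDerivAt_const (a (m + 1)) x)
      refine h1.congr_fderiv ?_
      refine ContinuousLinearMap.ext fun v => ?_
      rw [hfn']
      simp only [smul_zero, zero_add, ContinuousLinearMap.smulRight_apply,
        ContinuousLinearMap.add_apply, ContinuousLinearMap.smul_apply, BL_apply,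
        Nat.add_sub_cancel, Nat.cast_add, Nat.cast_one, smul_eq_mul, op_smul_eq_mul]
      rw [smul_mul_assoc, mul_smul_comm, mul_assoc]
  have hbound : ∀ (n : ℕ) (x : ℝ × ℝ), x ∈ Metric.ball (0 : ℝ × ℝ) R →
      ‖fn' n x‖ ≤ (1 + ‖I‖) * ((n : ℝ) * ‖a n‖ * ρ ^ n) := by
    intro n x hx
    rw [hfn']
    calc ‖BL I ((n : ℝ) • ((sliceCLM I x) ^ (n - 1) * a n))‖
        ≤ (1 + ‖I‖) * ‖(n : ℝ) • ((sliceCLM I x) ^ (n - 1) * a n)‖ :=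
          ContinuousLinearMap.opNorm_le_bound _ (by positivity) fun v => by
            rw [BL_apply]
            calc ‖sliceCLM I v * ((n : ℝ) • ((sliceCLM I x) ^ (n - 1) * a n))‖
                ≤ ‖sliceCLM I v‖ * ‖(n : ℝ) • ((sliceCLM I x) ^ (n - 1) * a n)‖ := norm_mul_le _ _
              _ ≤ ((1 + ‖I‖) * ‖v‖) * ‖(n : ℝ) • ((sliceCLM I x) ^ (n - 1) * a n)‖ := by
                gcongr; exact sliceCLM_norm_le I v
              _ = _ := by ring
      _ ≤ (1 + ‖I‖) * ((n : ℝ) * ‖a n‖ * ρ ^ n) := by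
          gcongr
          rw [norm_smul, Real.norm_eq_abs, abs_of_nonneg (Nat.cast_nonneg n)]
          calc (n : ℝ) * ‖(sliceCLM I x) ^ (n - 1) * a n‖
              ≤ (n : ℝ) * (‖(sliceCLM I x) ^ (n - 1)‖ * ‖a n‖) := by
                gcongr; exact norm_mul_le _ _
            _ ≤ (n : ℝ) * (ρ ^ n * ‖a n‖) := by
                gcongr
                rw [norm_pow]
                calc ‖sliceCLM I x‖ ^ (n - 1) ≤ ρ ^ (n - 1) :=
                      pow_le_pow_left₀ (norm_nonneg _) (hq_bound x hx) _
                  _ ≤ ρ ^ n := pow_le_pow_right₀ hρ1 (Nat.sub_le n 1)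
            _ = (n : ℝ) * ‖a n‖ * ρ ^ n := by ring
  have hu : Summable fun n : ℕ => (1 + ‖I‖) * ((n : ℝ) * ‖a n‖ * ρ ^ n) :=
    (summable_mul_pow hs ρ hρ0).mul_left _
  have hf0 : Summable fun n : ℕ => fn n p₀ := by
    refine Summable.of_norm_bounded (g := fun n : ℕ => ‖a n‖ * ρ ^ n)
      (hs ρ hρ0) fun n => ?_
    rw [hfn]
    calc ‖(sliceCLM I p₀) ^ n * a n‖ ≤ ‖(sliceCLM I p₀) ^ n‖ * ‖a n‖ := norm_mul_le _ _
      _ ≤ ρ ^ n * ‖a n‖ := by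
          gcongr
          rw [norm_pow]
          exact pow_le_pow_left₀ (norm_nonneg _)
            (hq_bound p₀ (by rw [Metric.mem_ball, dist_zero_right]; simp [hR])) _
      _ = ‖a n‖ * ρ ^ n := by ring
  have hp₀ : p₀ ∈ Metric.ball (0 : ℝ × ℝ) R := by
    rw [Metric.mem_ball, dist_zero_right]; simp [hR]
  have main := hasFDerivAt_tsum_of_isPreconnected hu Metric.isOpen_ball
    ((convex_ball (0 : ℝ × ℝ) R).isPreconnected) (fun n x _ => hderiv n x) hbound hp₀ hf0 hp₀
  -- identify the function
  have efun : (fun y => ∑' n, fn n y) = fun p => φ (sliceCLM I p) := by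
    funext p
    exact (hφ (sliceCLM I p)).tsum_eq
  rw [efun] at main
  -- identify the derivative
  have hsumd : Summable fun n : ℕ => (n : ℝ) • ((sliceCLM I p₀) ^ (n - 1) * a n) := by
    refine Summable.of_norm_bounded (g := fun n : ℕ => (n : ℝ) * ‖a n‖ * ρ ^ n)
      (summable_mul_pow hs ρ hρ0) fun n => ?_
    rw [norm_smul, Real.norm_eq_abs, abs_of_nonneg (Nat.cast_nonneg n)]
    calc (n : ℝ) * ‖(sliceCLM I p₀) ^ (n - 1) * a n‖
        ≤ (n : ℝ) * (‖(sliceCLM I p₀) ^ (n - 1)‖ * ‖a n‖) := by gcongr; exact norm_mul_le _ _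
      _ ≤ (n : ℝ) * (ρ ^ n * ‖a n‖) := by
          gcongr
          rw [norm_pow]
          calc ‖sliceCLM I p₀‖ ^ (n - 1) ≤ ρ ^ (n - 1) :=
                pow_le_pow_left₀ (norm_nonneg _) (hq_bound p₀ hp₀) _
            _ ≤ ρ ^ n := pow_le_pow_right₀ hρ1 (Nat.sub_le n 1)
      _ = (n : ℝ) * ‖a n‖ * ρ ^ n := by ring
  have ederiv : (∑' n, fn' n p₀) = BL I (φ' (sliceCLM I p₀)) := by
    have e1 : (∑' n : ℕ, fn' n p₀)
        = BL I (∑' n : ℕ, (n : ℝ) • ((sliceCLM I p₀) ^ (n - 1) * a n)) :=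
      ((BL I).map_tsum (f := fun n : ℕ => (n : ℝ) • ((sliceCLM I p₀) ^ (n - 1) * a n))
        hsumd).symm
    rw [e1]
    congr 1
    rw [Summable.tsum_eq_zero_add hsumd]
    simp only [Nat.cast_zero, zero_smul, zero_add, Nat.add_sub_cancel]
    rw [hφ']
    refine tsum_congr fun j => ?_
    rw [ha']
    rw [mul_smul_comm]
    push_cast
    rfl
  rw [ederiv] at main
  exact main

/-- The conjugate slice derivative `∂̄_I h = (1/2)(∂h/∂x + I·∂h/∂y)` for `h : ℝ² → ℍ`,
with `I` multiplying on the left. -/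
def dbar (I : ℍ[ℝ]) (g : ℝ × ℝ → ℍ[ℝ]) : ℝ × ℝ → ℍ[ℝ] :=
  fun p => (1/2 : ℝ) • (fderiv ℝ g p (1, 0) + I * fderiv ℝ g p (0, 1))

@[simp] lemma sliceCLM_one (I : ℍ[ℝ]) : sliceCLM I ((1:ℝ), (0:ℝ)) = 1 := by simp
@[simp] lemma sliceCLM_i (I : ℍ[ℝ]) : sliceCLM I ((0:ℝ), (1:ℝ)) = I := by simp


section terms

variable {I : ℍ[ℝ]} {φ φ' : ℍ[ℝ] → ℍ[ℝ]}

/-- The derivative of `p ↦ (sliceCLM (-I) p)^j * φ (sliceCLM I p)`. -/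
def termD (I : ℍ[ℝ]) (φ φ' : ℍ[ℝ] → ℍ[ℝ]) (j : ℕ) (p : ℝ × ℝ) : (ℝ × ℝ) →L[ℝ] ℍ[ℝ] :=
  (j : ℝ) • ((ContinuousLinearMap.mul ℝ ℍ[ℝ] ((sliceCLM (-I) p) ^ (j - 1))).comp
      (BL (-I) (φ (sliceCLM I p)))) +
    (ContinuousLinearMap.mul ℝ ℍ[ℝ] ((sliceCLM (-I) p) ^ j)).comp (BL I (φ' (sliceCLM I p)))

lemma termD_apply (j : ℕ) (p v : ℝ × ℝ) :
    termD I φ φ' j p v = (j : ℝ) • ((sliceCLM (-I) p) ^ (j - 1) * (sliceCLM (-I) v *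
        φ (sliceCLM I p))) + (sliceCLM (-I) p) ^ j * (sliceCLM I v * φ' (sliceCLM I p)) := rfl

lemma hasFDerivAt_term
    (H : ∀ p : ℝ × ℝ, HasFDerivAt (fun p => φ (sliceCLM I p)) (BL I (φ' (sliceCLM I p))) p)
    (j : ℕ) (p : ℝ × ℝ) :
    HasFDerivAt (fun p => (sliceCLM (-I) p) ^ j * φ (sliceCLM I p)) (termD I φ φ' j p) p := by
  match j with
  | 0 =>
    have e : (fun p : ℝ × ℝ => (sliceCLM (-I) p) ^ 0 * φ (sliceCLM I p)) =
        fun p => φ (sliceCLM I p) := by funext q; rw [pow_zero, one_mul]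
    rw [e]
    refine (H p).congr_fderiv ?_
    refine ContinuousLinearMap.ext fun v => ?_
    rw [termD_apply]
    simp
  | (j + 1) =>
    have h1 := (hasFDerivAt_slice_pow (-I) j p).mul' (H p)
    refine h1.congr_fderiv ?_
    refine ContinuousLinearMap.ext fun v => ?_
    rw [termD_apply]
    simp only [ContinuousLinearMap.add_apply, ContinuousLinearMap.smul_apply,
      ContinuousLinearMap.smulRight_apply, BL_apply, Nat.add_sub_cancel, Nat.cast_add,
      Nat.cast_one, smul_eq_mul, op_smul_eq_mul]
    rw [smul_mul_assoc, ((sliceCLM_commute (-I) v p).pow_right j).eq, mul_assoc]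
    exact add_comm _ _

lemma dbar_term (hI : I * I = -1)
    (H : ∀ p : ℝ × ℝ, HasFDerivAt (fun p => φ (sliceCLM I p)) (BL I (φ' (sliceCLM I p))) p)
    (r : ℝ) (j : ℕ) :
    dbar I (fun p => r • ((sliceCLM (-I) p) ^ j * φ (sliceCLM I p))) =
      fun p => (r * j) • ((sliceCLM (-I) p) ^ (j - 1) * φ (sliceCLM I p)) := by
  funext p
  have hF := hasFDerivAt_term H j p
  have hD : fderiv ℝ (fun p => r • ((sliceCLM (-I) p) ^ j * φ (sliceCLM I p))) p =
      r • termD I φ φ' j p := by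
    rw [fderiv_fun_const_smul hF.differentiableAt, hF.fderiv]
  rw [dbar, hD]
  simp only [ContinuousLinearMap.smul_apply, termD_apply, sliceCLM_one, sliceCLM_i, one_mul]
  have e0 : sliceCLM (-I) ((1:ℝ), (0:ℝ)) = 1 := sliceCLM_one (-I)
  have e1 : sliceCLM (-I) ((0:ℝ), (1:ℝ)) = -I := sliceCLM_i (-I)
  set c := sliceCLM (-I) p with hc
  set Φ := φ (sliceCLM I p) with hΦ
  set Φ' := φ' (sliceCLM I p) with hΦ'
  have hA : I * (c ^ (j-1) * (-I * Φ)) = c ^ (j-1) * Φ := by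
    rw [← mul_assoc, ((I_commute_slice' I p).pow_right (j-1)).eq, mul_assoc, ← mul_assoc I,
      mul_neg, hI, neg_neg, one_mul]
  have hB : I * (c ^ j * (I * Φ')) = -(c ^ j * Φ') := by
    rw [← mul_assoc, ((I_commute_slice' I p).pow_right j).eq, mul_assoc, ← mul_assoc I,
      hI, neg_one_mul, mul_neg]
  rw [mul_smul_comm, mul_add, mul_smul_comm, hA, hB]
  module
end terms

lemma dbar_sum {I : ℍ[ℝ]} {s : Finset ℕ} {F : ℕ → ℝ × ℝ → ℍ[ℝ]}
    (h : ∀ i ∈ s, ∀ p, DifferentiableAt ℝ (F i) p) :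
    dbar I (fun p => ∑ i ∈ s, F i p) = fun p => ∑ i ∈ s, dbar I (F i) p := by
  funext p
  rw [dbar, fderiv_fun_sum (fun i hi => h i hi p)]
  simp only [ContinuousLinearMap.coe_sum', Finset.sum_apply, dbar]
  rw [Finset.mul_sum, ← Finset.sum_add_distrib, Finset.smul_sum]

lemma dbar_G {I : ℍ[ℝ]} (hI : I * I = -1) {n : ℕ} {φ : ℕ → ℍ[ℝ] → ℍ[ℝ]}
    (hreg : ∀ k, k ≤ n → EntireSliceRegular (φ k)) (m : ℕ) :
    dbar I (fun p => ∑ k ∈ Finset.range (n+1),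
        ((k.descFactorial m : ℝ)) • ((sliceCLM (-I) p) ^ (k - m) * φ k (sliceCLM I p))) =
      fun p => ∑ k ∈ Finset.range (n+1),
        ((k.descFactorial (m+1) : ℝ)) • ((sliceCLM (-I) p) ^ (k - (m+1)) * φ k (sliceCLM I p)) := by
  have hD : ∀ k, k ≤ n → ∃ φ' : ℍ[ℝ] → ℍ[ℝ],
      ∀ p : ℝ × ℝ, HasFDerivAt (fun p => φ k (sliceCLM I p)) (BL I (φ' (sliceCLM I p))) p :=
    fun k hk => (esr_hasFDerivAt (hreg k hk)).imp fun φ' h => h.2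
  rw [dbar_sum (fun k hk p => ?_)]
  · funext p
    refine Finset.sum_congr rfl fun k hk => ?_
    have hk' : k ≤ n := Nat.lt_succ_iff.mp (Finset.mem_range.mp hk)
    obtain ⟨φ', H⟩ := hD k hk'
    have := congrFun (dbar_term hI H ((k.descFactorial m : ℝ)) (k - m)) p
    rw [this]
    congr 1
    rw [Nat.descFactorial_succ]
    push_cast
    ring
  · have hk' : k ≤ n := Nat.lt_succ_iff.mp (Finset.mem_range.mp hk)
    obtain ⟨φ', H⟩ := hD k hk'
    exact ((hasFDerivAt_term H (k - m) p).const_smul (k.descFactorial m : ℝ)).differentiableAt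

lemma iter_dbar {I : ℍ[ℝ]} (hI : I * I = -1) {n : ℕ} {φ : ℕ → ℍ[ℝ] → ℍ[ℝ]}
    (hreg : ∀ k, k ≤ n → EntireSliceRegular (φ k)) (m : ℕ) :
    (dbar I)^[m] (fun p => ∑ k ∈ Finset.range (n+1),
        (sliceCLM (-I) p) ^ k * φ k (sliceCLM I p)) =
      fun p => ∑ k ∈ Finset.range (n+1),
        ((k.descFactorial m : ℝ)) • ((sliceCLM (-I) p) ^ (k - m) * φ k (sliceCLM I p)) := by
  induction m with
  | zero =>
    simp only [Function.iterate_zero, id_eq]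
    funext p
    refine Finset.sum_congr rfl fun k hk => ?_
    rw [Nat.descFactorial_zero, Nat.cast_one, one_smul, Nat.sub_zero]
  | succ m ih =>
    rw [Function.iterate_succ_apply', ih, dbar_G hI hreg m]


lemma desc_eq (m j k : ℕ) (h : j + k ≤ m) :
    m.descFactorial (j + k) = m.choose j * (m - j).choose k * (j.factorial * k.factorial) := by
  have hjm : j ≤ m := le_trans (Nat.le_add_right j k) h
  have hkm : k ≤ m - j := by omega
  have h1 : m.descFactorial (j + k) * (m - (j + k)).factorial = m.factorial := by
    rw [Nat.descFactorial_eq_factorial_mul_choose]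
    calc (j+k).factorial * m.choose (j+k) * (m - (j+k)).factorial
        = m.choose (j+k) * (j+k).factorial * (m - (j+k)).factorial := by ring
      _ = m.factorial := Nat.choose_mul_factorial_mul_factorial h
  have h2 : (m.choose j * (m - j).choose k * (j.factorial * k.factorial)) *
      (m - (j + k)).factorial = m.factorial := by
    have e : m - (j + k) = (m - j) - k := by omega
    rw [e]
    calc m.choose j * (m - j).choose k * (j.factorial * k.factorial) * (m - j - k).factorial
        = (m.choose j * j.factorial) * ((m - j).choose k * k.factorial * (m - j - k).factorial) := by
          ring
      _ = (m.choose j * j.factorial) * (m - j).factorial := by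
          rw [Nat.choose_mul_factorial_mul_factorial hkm]
      _ = m.choose j * j.factorial * (m - j).factorial := by ring
      _ = m.factorial := Nat.choose_mul_factorial_mul_factorial hjm
  have hfac : 0 < (m - (j + k)).factorial := Nat.factorial_pos _
  exact Nat.eq_of_mul_eq_mul_right hfac (h1.trans h2.symm)

lemma alt_sum_real (N : ℕ) :
    ∑ k ∈ Finset.range (N + 1), (-1 : ℝ) ^ k * (N.choose k : ℝ) = if N = 0 then 1 else 0 := by
  have := Int.alternating_sum_range_choose (n := N)
  have h2 := congrArg (fun z : ℤ => (z : ℝ)) this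
  push_cast at h2
  rw [h2]

lemma scalar_id (n m : ℕ) (hm : m ≤ n) :
    ∑ j ∈ Finset.Icc 1 n, ∑ k ∈ Finset.range (n - j + 1),
      ((-1 : ℝ) ^ k / ((j.factorial : ℝ) * (k.factorial : ℝ))) * (m.descFactorial (j + k) : ℝ)
      = if m = 0 then 0 else 1 := by
  rcases Nat.eq_zero_or_pos m with hm0 | hm1
  · subst hm0
    simp only [if_pos rfl]
    refine Finset.sum_eq_zero fun j hj => Finset.sum_eq_zero fun k hk => ?_
    have hj1 : 1 ≤ j := (Finset.mem_Icc.mp hj).1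
    rw [Nat.descFactorial_eq_zero_iff_lt.mpr (by omega)]
    simp
  · rw [if_neg (by omega)]
    -- restrict outer sum to Icc 1 m
    rw [← Finset.sum_subset (Finset.Icc_subset_Icc_right hm) (fun j hj hj' => ?_)]
    · -- now restrict each inner sum
      have inner : ∀ j ∈ Finset.Icc 1 m,
          ∑ k ∈ Finset.range (n - j + 1),
            ((-1 : ℝ) ^ k / ((j.factorial : ℝ) * (k.factorial : ℝ))) *
              (m.descFactorial (j + k) : ℝ)
          = (m.choose j : ℝ) * ∑ k ∈ Finset.range (m - j + 1),
              (-1 : ℝ) ^ k * ((m - j).choose k : ℝ) := by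
        intro j hj
        obtain ⟨hj1, hjm⟩ := Finset.mem_Icc.mp hj
        rw [← Finset.sum_subset
          (Finset.range_subset_range.mpr (by omega : m - j + 1 ≤ n - j + 1)) (fun k hk hk' => ?_)]
        · rw [Finset.mul_sum]
          refine Finset.sum_congr rfl fun k hk => ?_
          have hkm : j + k ≤ m := by
            have := Finset.mem_range.mp hk; omega
          rw [desc_eq m j k hkm]
          have hj0 : (j.factorial : ℝ) ≠ 0 := Nat.cast_ne_zero.mpr (Nat.factorial_ne_zero j)
          have hk0 : (k.factorial : ℝ) ≠ 0 := Nat.cast_ne_zero.mpr (Nat.factorial_ne_zero k)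
          push_cast
          field_simp
        · have hk2 : ¬ k < m - j + 1 := fun hcon => hk' (Finset.mem_range.mpr hcon)
          have hkbig : m < j + k := by omega
          rw [Nat.descFactorial_eq_zero_iff_lt.mpr hkbig]
          simp
      rw [Finset.sum_congr rfl inner]
      -- now evaluate
      have : ∀ j ∈ Finset.Icc 1 m,
          (m.choose j : ℝ) * ∑ k ∈ Finset.range (m - j + 1),
            (-1 : ℝ) ^ k * ((m - j).choose k : ℝ)
          = if j = m then 1 else 0 := by
        intro j hj
        obtain ⟨hj1, hjm⟩ := Finset.mem_Icc.mp hj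
        rw [alt_sum_real (m - j)]
        by_cases hjm' : j = m
        · subst hjm'
          simp
        · rw [if_neg (by omega), if_neg hjm']
          ring
      rw [Finset.sum_congr rfl this, Finset.sum_ite_eq' (Finset.Icc 1 m) m (fun _ => (1:ℝ))]
      rw [if_pos (Finset.mem_Icc.mpr ⟨hm1, le_refl m⟩)]
    · -- outer terms with m < j vanish
      refine Finset.sum_eq_zero fun k hk => ?_
      have hj1 : 1 ≤ j ∧ j ≤ n := Finset.mem_Icc.mp hj
      have hjm : ¬ (1 ≤ j ∧ j ≤ m) := fun h => hj' (Finset.mem_Icc.mpr h)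
      have : m < j := by omega
      rw [Nat.descFactorial_eq_zero_iff_lt.mpr (by omega)]
      simp

lemma final_alg (n : ℕ) (c : ℍ[ℝ]) (Φ : ℕ → ℍ[ℝ]) :
    ∑ m ∈ Finset.range (n + 1), c ^ m * Φ m =
      Φ 0 + ∑ j ∈ Finset.Icc 1 n, ∑ k ∈ Finset.range (n - j + 1),
        ((-1 : ℝ) ^ k / ((j.factorial : ℝ) * (k.factorial : ℝ))) •
          (c ^ (j + k) * ∑ m ∈ Finset.range (n + 1),
            ((m.descFactorial (j + k) : ℝ)) • (c ^ (m - (j + k)) * Φ m)) := by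
  have key : ∀ l m : ℕ, ((m.descFactorial l : ℝ)) • (c ^ l * (c ^ (m - l) * Φ m)) =
      ((m.descFactorial l : ℝ)) • (c ^ m * Φ m) := by
    intro l m
    by_cases h : l ≤ m
    · rw [← mul_assoc, ← pow_add, Nat.add_sub_cancel' h]
    · rw [Nat.descFactorial_eq_zero_iff_lt.mpr (by omega), Nat.cast_zero, zero_smul, zero_smul]
  have hrhs : ∀ j k : ℕ,
      ((-1 : ℝ) ^ k / ((j.factorial : ℝ) * (k.factorial : ℝ))) •
        (c ^ (j + k) * ∑ m ∈ Finset.range (n + 1),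
          ((m.descFactorial (j + k) : ℝ)) • (c ^ (m - (j + k)) * Φ m)) =
      ∑ m ∈ Finset.range (n + 1),
        (((-1 : ℝ) ^ k / ((j.factorial : ℝ) * (k.factorial : ℝ))) *
          (m.descFactorial (j + k) : ℝ)) • (c ^ m * Φ m) := by
    intro j k
    rw [Finset.mul_sum, Finset.smul_sum]
    refine Finset.sum_congr rfl fun m _ => ?_
    rw [mul_smul_comm, key (j + k) m, smul_smul]
  symm
  calc Φ 0 + ∑ j ∈ Finset.Icc 1 n, ∑ k ∈ Finset.range (n - j + 1),
        ((-1 : ℝ) ^ k / ((j.factorial : ℝ) * (k.factorial : ℝ))) •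
          (c ^ (j + k) * ∑ m ∈ Finset.range (n + 1),
            ((m.descFactorial (j + k) : ℝ)) • (c ^ (m - (j + k)) * Φ m))
      = Φ 0 + ∑ j ∈ Finset.Icc 1 n, ∑ k ∈ Finset.range (n - j + 1),
          ∑ m ∈ Finset.range (n + 1),
            (((-1 : ℝ) ^ k / ((j.factorial : ℝ) * (k.factorial : ℝ))) *
              (m.descFactorial (j + k) : ℝ)) • (c ^ m * Φ m) := by
        rw [Finset.sum_congr rfl fun j _ => Finset.sum_congr rfl fun k _ => hrhs j k]
    _ = Φ 0 + ∑ m ∈ Finset.range (n + 1),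
          (∑ j ∈ Finset.Icc 1 n, ∑ k ∈ Finset.range (n - j + 1),
            ((-1 : ℝ) ^ k / ((j.factorial : ℝ) * (k.factorial : ℝ))) *
              (m.descFactorial (j + k) : ℝ)) • (c ^ m * Φ m) := by
        congr 1
        have swap1 : ∀ j : ℕ,
            (∑ k ∈ Finset.range (n - j + 1), ∑ m ∈ Finset.range (n + 1),
              (((-1 : ℝ) ^ k / ((j.factorial : ℝ) * (k.factorial : ℝ))) *
                (m.descFactorial (j + k) : ℝ)) • (c ^ m * Φ m)) =
            ∑ m ∈ Finset.range (n + 1), ∑ k ∈ Finset.range (n - j + 1),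
              (((-1 : ℝ) ^ k / ((j.factorial : ℝ) * (k.factorial : ℝ))) *
                (m.descFactorial (j + k) : ℝ)) • (c ^ m * Φ m) :=
          fun j => Finset.sum_comm
        rw [Finset.sum_congr rfl fun j _ => swap1 j]
        have swap2 :
            (∑ j ∈ Finset.Icc 1 n, ∑ m ∈ Finset.range (n + 1),
              ∑ k ∈ Finset.range (n - j + 1),
                (((-1 : ℝ) ^ k / ((j.factorial : ℝ) * (k.factorial : ℝ))) *
                  (m.descFactorial (j + k) : ℝ)) • (c ^ m * Φ m)) =
            ∑ m ∈ Finset.range (n + 1), ∑ j ∈ Finset.Icc 1 n,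
              ∑ k ∈ Finset.range (n - j + 1),
                (((-1 : ℝ) ^ k / ((j.factorial : ℝ) * (k.factorial : ℝ))) *
                  (m.descFactorial (j + k) : ℝ)) • (c ^ m * Φ m) :=
          Finset.sum_comm
        rw [swap2]
        refine Finset.sum_congr rfl fun m _ => ?_
        rw [Finset.sum_smul]
        refine Finset.sum_congr rfl fun j _ => ?_
        rw [Finset.sum_smul]
    _ = Φ 0 + ∑ m ∈ Finset.range (n + 1), (if m = 0 then (0:ℝ) else 1) • (c ^ m * Φ m) := by
        congr 1
        refine Finset.sum_congr rfl fun m hm => ?_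
        rw [scalar_id n m (Nat.lt_succ_iff.mp (Finset.mem_range.mp hm))]
    _ = ∑ m ∈ Finset.range (n + 1), c ^ m * Φ m := by
        rw [Finset.sum_range_succ' (fun m => (if m = 0 then (0:ℝ) else 1) • (c ^ m * Φ m)) n,
          Finset.sum_range_succ' (fun m => c ^ m * Φ m) n]
        simp only [Nat.succ_ne_zero, ite_false, ite_true, one_smul, zero_smul, add_zero,
          pow_zero, one_mul]
        exact add_comm _ _

/-- for `f` S-polyregular of level `n` in decomposed form,
`f(q) = φ_0(q) + ∑_{j=1}^{n} ∑_{k=0}^{n−j} (−1)^k (q̄^{j+k}/(j!k!)) ((∂̄_I)^{j+k} g_I)(x,y)`. -/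
theorem stmt1 (n : ℕ) (f : ℍ[ℝ] → ℍ[ℝ]) (φ : ℕ → ℍ[ℝ] → ℍ[ℝ])
    (hreg : ∀ k, k ≤ n → EntireSliceRegular (φ k))
    (hf : ∀ q : ℍ[ℝ], f q = ∑ k ∈ Finset.range (n + 1), (star q) ^ k * φ k q) :
    ∀ I : ℍ[ℝ], I * I = -1 → ∀ x y : ℝ,
      f ((x : ℍ[ℝ]) + I * (y : ℍ[ℝ])) =
        φ 0 ((x : ℍ[ℝ]) + I * (y : ℍ[ℝ])) +
          ∑ j ∈ Finset.Icc 1 n, ∑ k ∈ Finset.range (n - j + 1),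
            ((-1 : ℝ) ^ k / ((j.factorial : ℝ) * (k.factorial : ℝ))) •
              ((star ((x : ℍ[ℝ]) + I * (y : ℍ[ℝ]))) ^ (j + k) *
                (dbar I)^[j + k]
                  (fun p : ℝ × ℝ => f ((p.1 : ℍ[ℝ]) + I * (p.2 : ℍ[ℝ]))) (x, y)) := by
  intro I hI x y
  have hg : (fun p : ℝ × ℝ => f ((p.1 : ℍ[ℝ]) + I * (p.2 : ℍ[ℝ]))) =
      fun p => ∑ k ∈ Finset.range (n + 1),
        (sliceCLM (-I) p) ^ k * φ k (sliceCLM I p) := by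
    funext p
    rw [show ((p.1 : ℍ[ℝ]) + I * (p.2 : ℍ[ℝ])) = sliceCLM I p from rfl, hf]
    exact Finset.sum_congr rfl fun k _ => by rw [star_slice I hI p]
  have hq : ((x : ℍ[ℝ]) + I * (y : ℍ[ℝ])) = sliceCLM I (x, y) := rfl
  have hstq : star ((x : ℍ[ℝ]) + I * (y : ℍ[ℝ])) = sliceCLM (-I) (x, y) := by
    rw [hq, star_slice I hI]
  rw [hf, hg, hstq, hq]
  have hiter : ∀ l : ℕ, (dbar I)^[l]
      (fun p => ∑ k ∈ Finset.range (n + 1),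
        (sliceCLM (-I) p) ^ k * φ k (sliceCLM I p)) (x, y) =
      ∑ m ∈ Finset.range (n + 1),
        ((m.descFactorial l : ℝ)) • ((sliceCLM (-I) (x, y)) ^ (m - l) * φ m (sliceCLM I (x, y))) :=
    fun l => congrFun (iter_dbar hI hreg l) (x, y)
  calc ∑ k ∈ Finset.range (n + 1),
        (sliceCLM (-I) (x, y)) ^ k * φ k (sliceCLM I (x, y))
      = φ 0 (sliceCLM I (x, y)) +
        ∑ j ∈ Finset.Icc 1 n, ∑ k ∈ Finset.range (n - j + 1),
          ((-1 : ℝ) ^ k / ((j.factorial : ℝ) * (k.factorial : ℝ))) •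
            ((sliceCLM (-I) (x, y)) ^ (j + k) * ∑ m ∈ Finset.range (n + 1),
              ((m.descFactorial (j + k) : ℝ)) •
                ((sliceCLM (-I) (x, y)) ^ (m - (j + k)) * φ m (sliceCLM I (x, y)))) :=
        final_alg n (sliceCLM (-I) (x, y)) (fun m => φ m (sliceCLM I (x, y)))
    _ = _ := by
        congr 1
        refine Finset.sum_congr rfl fun j _ => Finset.sum_congr rfl fun k _ => ?_
        rw [hiter (j + k)]
end
end

section
/- Identity Principle for S-polyregular functions: let n ∈ ℕ and let f : ℍ → ℍ be S-polyregular of level n in decomposed form, f(q) = ∑_{k=0}^{n} q̄^k·φ_k(q) with each φ_k entire slice regular. Suppose there exist I ∈ 𝕊 and a nonempty open set U ⊆ ℝ² such that f(x+Iy) = 0 for all (x,y) ∈ U. Then f is identically zero on ℍ, and moreover each φ_k is identically zero on ℍ. -/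
open scoped Quaternion
set_option maxHeartbeats 1000000

noncomputable section

namespace Stmt6Aux

variable (I : ℍ[ℝ])

lemma I_re (hI : I * I = -1) : I.re = 0 := by
  have h := congrArg QuaternionAlgebra.re hI
  have h1 := congrArg QuaternionAlgebra.imI hI
  have h2 := congrArg QuaternionAlgebra.imJ hI
  have h3 := congrArg QuaternionAlgebra.imK hI
  simp [Quaternion.re_mul, Quaternion.imI_mul, Quaternion.imJ_mul, Quaternion.imK_mul]
    at h h1 h2 h3
  nlinarith [sq_nonneg I.re, sq_nonneg I.imI, sq_nonneg I.imJ, sq_nonneg I.imK]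

lemma I_sq_im (hI : I * I = -1) : I.imI ^ 2 + I.imJ ^ 2 + I.imK ^ 2 = 1 := by
  have h := congrArg QuaternionAlgebra.re hI
  have h0 := I_re I hI
  simp [Quaternion.re_mul] at h
  nlinarith

lemma star_I (hI : I * I = -1) : star I = -I := by
  have h0 := I_re I hI
  ext <;> simp [h0]

lemma sig_mul_aux (hI : I * I = -1) (a b c d : ℝ) :
    ((a : ℍ[ℝ]) + (b : ℍ[ℝ]) * I) * ((c : ℍ[ℝ]) + (d : ℍ[ℝ]) * I)
      = ((a * c - b * d : ℝ) : ℍ[ℝ]) + ((a * d + b * c : ℝ) : ℍ[ℝ]) * I := by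
  have h1 : I * (c : ℍ[ℝ]) = (c : ℍ[ℝ]) * I := (Quaternion.coe_commutes c I).symm
  have h2 : I * (d : ℍ[ℝ]) = (d : ℍ[ℝ]) * I := (Quaternion.coe_commutes d I).symm
  have key : (b : ℍ[ℝ]) * I * ((d : ℍ[ℝ]) * I) = -((b : ℍ[ℝ]) * d) := by
    rw [mul_assoc, ← mul_assoc I, h2, mul_assoc, hI]; simp [mul_assoc]
  have key2 : (b : ℍ[ℝ]) * I * (c : ℍ[ℝ]) = (b : ℍ[ℝ]) * c * I := by
    rw [mul_assoc, h1, mul_assoc]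
  push_cast
  rw [add_mul, mul_add, mul_add, key, key2]
  noncomm_ring

/-- The slice embedding `ℂ → ℍ` sending `i` to `I`. -/
def sig (hI : I * I = -1) : ℂ →+* ℍ[ℝ] where
  toFun z := (z.re : ℍ[ℝ]) + (z.im : ℍ[ℝ]) * I
  map_one' := by simp
  map_mul' z w := by rw [Complex.mul_re, Complex.mul_im, sig_mul_aux I hI]
  map_zero' := by simp
  map_add' z w := by rw [Complex.add_re, Complex.add_im]; push_cast; noncomm_ring

variable (hI : I * I = -1)

lemma sig_apply (z : ℂ) : sig I hI z = (z.re : ℍ[ℝ]) + (z.im : ℍ[ℝ]) * I := rfl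

lemma norm_sig (z : ℂ) : ‖sig I hI z‖ = ‖z‖ := by
  have h0 := I_re I hI
  have h1 := I_sq_im I hI
  have hn : Quaternion.normSq (sig I hI z) = z.re ^ 2 + z.im ^ 2 := by
    rw [sig_apply, Quaternion.coe_mul_eq_smul, Quaternion.normSq_def']
    simp [h0]
    nlinarith [h1]
  have h2 : ‖sig I hI z‖ * ‖sig I hI z‖ = ‖z‖ * ‖z‖ := by
    rw [← Quaternion.normSq_eq_norm_mul_self, hn, ← sq, Complex.sq_norm, Complex.normSq_apply]
    ring
  nlinarith [norm_nonneg (sig I hI z), norm_nonneg z, h2]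

lemma star_sig (z : ℂ) :
    star (sig I hI z) = sig I hI (starRingEnd ℂ z) := by
  rw [sig_apply, sig_apply]
  simp only [Complex.conj_re, Complex.conj_im]
  rw [star_add, star_mul, star_I I hI, Quaternion.star_coe, Quaternion.star_coe]
  push_cast
  have h : -I * ((z.im : ℝ) : ℍ[ℝ]) = -((z.im : ℝ) : ℍ[ℝ]) * I := by
    rw [neg_mul, neg_mul, Quaternion.coe_commutes]
  rw [h]

lemma sig_ofReal (t : ℝ) : sig I hI (t : ℂ) = (t : ℍ[ℝ]) := by
  rw [sig_apply]; simp

lemma sig_ne_zero (z : ℂ) (hz : z ≠ 0) : sig I hI z ≠ 0 := by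
  intro h
  apply hz
  have := norm_sig I hI z
  rw [h, norm_zero] at this
  exact norm_eq_zero.mp this.symm

/-- `sig` as a continuous linear map over `ℝ`. -/
def sigL : ℂ →L[ℝ] ℍ[ℝ] :=
  Complex.reCLM.smulRight (1 : ℍ[ℝ]) + Complex.imCLM.smulRight I

lemma sigL_apply (z : ℂ) : sigL I z = (z.re : ℍ[ℝ]) + (z.im : ℍ[ℝ]) * I := by
  simp [sigL, Quaternion.coe_mul_eq_smul]
  rw [← Quaternion.coe_one, Quaternion.smul_coe, mul_one]

lemma sigL_eq (z : ℂ) : sigL I z = sig I hI z := by rw [sigL_apply, sig_apply]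

/-- The formal multilinear series of `z ↦ ∑ (sig z)^j * a j`. -/
def pser (a : ℕ → ℍ[ℝ]) : FormalMultilinearSeries ℝ ℂ ℍ[ℝ] := fun j =>
  ((ContinuousLinearMap.mul ℝ ℍ[ℝ]).flip (a j)).compContinuousMultilinearMap
    ((ContinuousMultilinearMap.mkPiAlgebraFin ℝ j ℍ[ℝ]).compContinuousLinearMap
      (fun _ => sigL I))

lemma pser_apply (a : ℕ → ℍ[ℝ]) (j : ℕ) (z : ℂ) :
    pser I a j (fun _ => z) = (sigL I z) ^ j * a j := by
  simp [pser, ContinuousMultilinearMap.mkPiAlgebraFin_apply, List.ofFn_const,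
    List.prod_replicate]

lemma pser_norm_le (a : ℕ → ℍ[ℝ]) (j : ℕ) :
    ‖pser I a j‖ ≤ ‖a j‖ * ‖sigL I‖ ^ j := by
  refine le_trans (ContinuousLinearMap.norm_compContinuousMultilinearMap_le _ _) ?_
  have h1 : ‖(ContinuousLinearMap.mul ℝ ℍ[ℝ]).flip (a j)‖ ≤ ‖a j‖ := by
    refine ContinuousLinearMap.opNorm_le_bound _ (norm_nonneg _) fun q => ?_
    simp [norm_mul, mul_comm]
  have h2 : ‖(ContinuousMultilinearMap.mkPiAlgebraFin ℝ j ℍ[ℝ]).compContinuousLinearMap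
      (fun _ => sigL I)‖ ≤ ‖sigL I‖ ^ j := by
    refine le_trans (ContinuousMultilinearMap.norm_compContinuousLinearMap_le _ _) ?_
    rw [ContinuousMultilinearMap.norm_mkPiAlgebraFin]
    simp
  calc ‖(ContinuousLinearMap.mul ℝ ℍ[ℝ]).flip (a j)‖ * _ ≤ ‖a j‖ * ‖sigL I‖ ^ j :=
    mul_le_mul h1 h2 (ContinuousMultilinearMap.opNorm_nonneg _) (norm_nonneg _)

lemma analytic_aux (a : ℕ → ℍ[ℝ])
    (ha : ∀ r : ℝ, 0 < r → Summable fun j => ‖a j‖ * r ^ j) (g : ℍ[ℝ] → ℍ[ℝ])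
    (hg : ∀ q, HasSum (fun j => q ^ j * a j) (g q)) :
    AnalyticOnNhd ℝ (fun z : ℂ => g (sigL I z)) Set.univ := by
  have hrad : (pser I a).radius = ⊤ := by
    apply FormalMultilinearSeries.radius_eq_top_of_summable_norm
    intro r
    have hR : (0:ℝ) < ‖sigL I‖ * r + 1 := by positivity
    refine Summable.of_nonneg_of_le (fun j => by positivity) (fun j => ?_) (ha _ hR)
    calc ‖pser I a j‖ * (r:ℝ) ^ j ≤ (‖a j‖ * ‖sigL I‖ ^ j) * r ^ j := by
          apply mul_le_mul_of_nonneg_right (pser_norm_le I a j) (by positivity)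
      _ = ‖a j‖ * (‖sigL I‖ * r) ^ j := by ring
      _ ≤ ‖a j‖ * (‖sigL I‖ * r + 1) ^ j := by
          apply mul_le_mul_of_nonneg_left _ (norm_nonneg _)
          exact pow_le_pow_left₀ (by positivity) (by linarith) j
  have hball : HasFPowerSeriesOnBall (fun z : ℂ => g (sigL I z)) (pser I a) 0 ⊤ :=
    { r_le := by rw [hrad]
      r_pos := by simp
      hasSum := by
        intro y _
        rw [zero_add]
        simpa only [pser_apply] using hg (sigL I y) }
  intro z _
  exact hball.analyticAt_of_mem (by simp [edist_lt_top])

end Stmt6Aux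

open Stmt6Aux Finset

/-- Identity Principle for S-polyregular functions: if `f` vanishes on a
nonempty open subset of a slice, then `f ≡ 0` on `ℍ` and each component `φ_k ≡ 0`. -/
theorem stmt6 (n : ℕ) (f : ℍ[ℝ] → ℍ[ℝ]) (φ : ℕ → ℍ[ℝ] → ℍ[ℝ])
    (hreg : ∀ k, k ≤ n → EntireSliceRegular (φ k))
    (hf : ∀ q : ℍ[ℝ], f q = ∑ k ∈ Finset.range (n + 1), (star q) ^ k * φ k q)
    (I : ℍ[ℝ]) (hI : I * I = -1) (U : Set (ℝ × ℝ)) (hU : IsOpen U) (hUne : U.Nonempty)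
    (hvan : ∀ p : ℝ × ℝ, p ∈ U → f ((p.1 : ℍ[ℝ]) + I * (p.2 : ℍ[ℝ])) = 0) :
    (∀ q : ℍ[ℝ], f q = 0) ∧ ∀ k, k ≤ n → ∀ q : ℍ[ℝ], φ k q = 0 := by
  classical
  set σ : ℂ →+* ℍ[ℝ] := sig I hI with hσ
  -- coefficient functions
  set A : ℕ → ℕ → ℍ[ℝ] := fun k => if h : k ≤ n then (hreg k h).choose else 0 with hA
  have hA_sum : ∀ k, k ≤ n → ∀ r : ℝ, 0 < r → Summable fun j => ‖A k j‖ * r ^ j := by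
    intro k hk
    simp only [hA, dif_pos hk]
    exact (hreg k hk).choose_spec.1
  have hA_rep : ∀ k, k ≤ n → ∀ q, HasSum (fun j => q ^ j * A k j) (φ k q) := by
    intro k hk
    simp only [hA, dif_pos hk]
    exact (hreg k hk).choose_spec.2
  -- Step 1 : F := f ∘ σ is real-analytic on ℂ
  have hφan : ∀ k, k ≤ n → AnalyticOnNhd ℝ (fun z : ℂ => φ k (σ z)) Set.univ := by
    intro k hk
    have heq : (fun z : ℂ => φ k (σ z)) = (fun z : ℂ => φ k (sigL I z)) :=
      funext fun z => by rw [sigL_eq I hI]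
    rw [heq]
    exact analytic_aux I (A k) (hA_sum k hk) (φ k) (hA_rep k hk)
  have hconjan : AnalyticOnNhd ℝ (fun z : ℂ => σ (starRingEnd ℂ z)) Set.univ := by
    have heq2 : (fun z : ℂ => σ (starRingEnd ℂ z))
        = ⇑((sigL I).comp (Complex.conjCLE.toContinuousLinearMap)) := by
      funext z
      rw [ContinuousLinearMap.comp_apply]
      rw [hσ, ← sigL_eq I hI]
      rfl
    rw [heq2]
    exact ContinuousLinearMap.analyticOnNhd _ _
  have hFan : AnalyticOnNhd ℝ (fun z : ℂ => f (σ z)) Set.univ := by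
    have heq : (fun z : ℂ => f (σ z))
        = fun z : ℂ => ∑ k ∈ range (n + 1), (σ (starRingEnd ℂ z)) ^ k * φ k (σ z) := by
      funext z
      rw [hf (σ z)]
      refine Finset.sum_congr rfl fun k _ => ?_
      rw [hσ, star_sig I hI]
    rw [heq]
    apply Finset.analyticOnNhd_fun_sum
    intro k hk
    exact (hconjan.pow k).mul (hφan k (Finset.mem_range_succ_iff.mp hk))
  -- Step 2 : identity principle, F vanishes everywhere
  have hF0 : ∀ z : ℂ, f (σ z) = 0 := by
    obtain ⟨p₀, hp₀⟩ := hUne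
    set z₀ : ℂ := ⟨p₀.1, p₀.2⟩ with hz₀
    have hVopen : IsOpen {z : ℂ | (z.re, z.im) ∈ U} :=
      hU.preimage (Complex.continuous_re.prodMk Complex.continuous_im)
    have hz₀V : z₀ ∈ {z : ℂ | (z.re, z.im) ∈ U} := by
      simp only [Set.mem_setOf_eq, hz₀]
      simpa using hp₀
    have hvan' : ∀ z : ℂ, (z.re, z.im) ∈ U → f (σ z) = 0 := by
      intro z hz
      have hzz : σ z = (z.re : ℍ[ℝ]) + I * (z.im : ℍ[ℝ]) := by
        rw [hσ, sig_apply, Quaternion.coe_commutes]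
      rw [hzz]
      exact hvan (z.re, z.im) hz
    have hev : (fun z : ℂ => f (σ z)) =ᶠ[nhds z₀] 0 := by
      filter_upwards [hVopen.mem_nhds hz₀V] with z hz
      exact hvan' z hz
    have hEq := hFan.eqOn_zero_of_preconnected_of_eventuallyEq_zero
      isPreconnected_univ (Set.mem_univ z₀) hev
    intro z
    exact hEq (Set.mem_univ z)
  -- Step 3 : radial power series extraction
  have hstep : ∀ θ : ℝ, ∀ m : ℕ,
      ∑ k ∈ range (n + 1),
        (if k ≤ m then (σ (starRingEnd ℂ (Complex.exp (θ * Complex.I)))) ^ k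
          * (σ (Complex.exp (θ * Complex.I))) ^ (m - k) * A k (m - k) else 0) = 0 := by
    intro θ
    set w : ℂ := Complex.exp (θ * Complex.I) with hw
    set cc : ℕ → ℍ[ℝ] := fun m => ∑ k ∈ range (n + 1),
      (if k ≤ m then (σ (starRingEnd ℂ w)) ^ k * (σ w) ^ (m - k) * A k (m - k) else 0) with hcc
    have habs : ‖w‖ = 1 := by rw [hw]; exact Complex.norm_exp_ofReal_mul_I θ
    have habs' : ‖(starRingEnd ℂ w)‖ = 1 := by
      rw [Complex.norm_conj]; exact habs
    -- the sum representation
    have hsum : ∀ t : ℝ, HasSum (fun m => t ^ m • cc m) (f (σ (t * w))) := by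
      intro t
      have hterm : ∀ k ∈ range (n + 1),
          HasSum (fun m => t ^ m •
              (if k ≤ m then (σ (starRingEnd ℂ w)) ^ k * (σ w) ^ (m - k) * A k (m - k) else 0))
            ((star (σ (t * w))) ^ k * φ k (σ (t * w))) := by
        intro k hk
        have hk' : k ≤ n := Finset.mem_range_succ_iff.mp hk
        have h1 := hA_rep k hk' (σ (t * w))
        have h2 := h1.mul_left ((star (σ (t * w))) ^ k)
        have hstar : star (σ (t * w)) = t • σ (starRingEnd ℂ w) := by
          rw [hσ, star_sig I hI, map_mul, Complex.conj_ofReal, map_mul, sig_ofReal I hI,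
            Quaternion.coe_mul_eq_smul]
        have hsigtw : σ (t * w) = t • σ w := by
          rw [hσ, map_mul, sig_ofReal I hI, Quaternion.coe_mul_eq_smul]
        have hinj : Function.Injective (fun j : ℕ => j + k) := add_left_injective k
        rw [← Function.Injective.hasSum_iff hinj]
        · refine h2.congr_fun fun j => ?_
          simp only [Function.comp]
          rw [if_pos (Nat.le_add_left k j), Nat.add_sub_cancel]
          rw [hstar, hsigtw, smul_pow, smul_pow, smul_mul_assoc, smul_mul_assoc,
            mul_smul_comm, smul_smul, ← pow_add, mul_assoc, Nat.add_comm j k]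
        · intro m hm
          have hnk : ¬ k ≤ m := by
            intro hkm
            exact hm ⟨m - k, by show m - k + k = m; omega⟩
          rw [if_neg hnk, smul_zero]
      have hss := hasSum_sum hterm
      rw [← hf (σ (t * w))] at hss
      refine hss.congr_fun fun m => ?_
      simp only [hcc]
      rw [Finset.smul_sum]
    -- power series of t ↦ f (σ (t w)) around 0
    set qser : FormalMultilinearSeries ℝ ℝ ℍ[ℝ] :=
      fun m => ContinuousMultilinearMap.mkPiRing ℝ (Fin m) (cc m) with hqser
    have hqnorm : ∀ m, ‖qser m‖ = ‖cc m‖ := fun m =>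
      ContinuousMultilinearMap.norm_mkPiRing (cc m)
    have hccle : ∀ m, ‖cc m‖ ≤ ∑ k ∈ range (n + 1),
        (if k ≤ m then ‖A k (m - k)‖ else 0) := by
      intro m
      simp only [hcc]
      refine le_trans (norm_sum_le _ _) (Finset.sum_le_sum fun k _ => ?_)
      by_cases hkm : k ≤ m
      · rw [if_pos hkm, if_pos hkm]
        rw [norm_mul, norm_mul, norm_pow, norm_pow, hσ, norm_sig I hI, norm_sig I hI,
          habs, habs']
        simp
      · rw [if_neg hkm, if_neg hkm, norm_zero]
    have hsummable : Summable fun m => ‖qser m‖ * (1:ℝ) ^ m := by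
      simp only [one_pow, mul_one, hqnorm]
      have hbound : Summable fun m => ∑ k ∈ range (n + 1),
          (if k ≤ m then ‖A k (m - k)‖ else 0) := by
        apply summable_sum
        intro k _
        by_cases hk' : k ≤ n
        · have hs : Summable fun j => ‖A k j‖ := by
            simpa using hA_sum k hk' 1 one_pos
          have hinj : Function.Injective (fun j : ℕ => j + k) := add_left_injective k
          rw [← Function.Injective.summable_iff hinj]
          · refine hs.congr fun j => ?_
            simp only [Function.comp]
            rw [if_pos (Nat.le_add_left k j), Nat.add_sub_cancel]
          · intro m hm
            have hnk : ¬ k ≤ m := by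
              intro hkm
              exact hm ⟨m - k, by show m - k + k = m; omega⟩
            rw [if_neg hnk]
        · have hA0 : ∀ m : ℕ, (if k ≤ m then ‖A k (m - k)‖ else 0) = 0 := by
            intro m
            simp [hA, dif_neg hk']
          exact summable_zero.congr fun m => (hA0 m).symm
      exact hbound.of_nonneg_of_le (fun m => norm_nonneg _) hccle
    have hpball : HasFPowerSeriesOnBall (fun t : ℝ => f (σ (t * w))) qser 0 1 :=
      { r_le := by
          have hle := FormalMultilinearSeries.le_radius_of_summable (r := 1) qser
            (by simpa using hsummable)
          simpa using hle
        r_pos := zero_lt_one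
        hasSum := by
          intro y _
          rw [zero_add]
          refine (hsum y).congr_fun fun m => ?_
          simp only [hqser]
          rw [ContinuousMultilinearMap.mkPiRing_apply]
          simp }
    have hzfun : (fun t : ℝ => f (σ (t * w))) = 0 := funext fun t => hF0 _
    rw [hzfun] at hpball
    intro m
    have happ := hpball.hasFPowerSeriesAt.apply_eq_zero m 1
    simp only [hqser] at happ
    rw [ContinuousMultilinearMap.mkPiRing_apply] at happ
    simpa [hcc] using happ
  -- Step 4 : Vandermonde extraction of coefficients
  have hA0 : ∀ k, k ≤ n → ∀ j, A k j = 0 := by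
    intro k₀ hk₀ j₀
    set m : ℕ := k₀ + j₀ with hm
    set B : ℕ → ℍ[ℝ] := fun k => if k ≤ m then A k (m - k) else 0 with hB
    -- simplified relation
    have hkey : ∀ θ : ℝ,
        ∑ k ∈ range (n + 1), (σ (Complex.exp ((-2 * θ : ℝ) * Complex.I))) ^ k * B k = 0 := by
      intro θ
      have h0 := hstep θ m
      set w : ℂ := Complex.exp ((θ : ℝ) * Complex.I) with hw
      set v : ℂ := Complex.exp ((-2 * θ : ℝ) * Complex.I) with hv
      have hterm : ∀ k, k ≤ m →
          (σ (starRingEnd ℂ w)) ^ k * (σ w) ^ (m - k)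
            = σ (w ^ m) * (σ v) ^ k := by
        intro k hkm
        have hcx : (starRingEnd ℂ w) ^ k * w ^ (m - k) = w ^ m * v ^ k := by
          rw [hw, hv, ← Complex.exp_conj]
          rw [← Complex.exp_nat_mul, ← Complex.exp_nat_mul, ← Complex.exp_nat_mul,
            ← Complex.exp_nat_mul, ← Complex.exp_add, ← Complex.exp_add]
          congr 1
          have hcast : ((m - k : ℕ) : ℂ) = (m : ℂ) - (k : ℂ) := Nat.cast_sub hkm
          rw [hcast]
          simp only [map_mul, Complex.conj_ofReal, Complex.conj_I]
          push_cast
          ring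
        calc (σ (starRingEnd ℂ w)) ^ k * (σ w) ^ (m - k)
            = σ ((starRingEnd ℂ w) ^ k * w ^ (m - k)) := by rw [map_mul, map_pow, map_pow]
          _ = σ (w ^ m * v ^ k) := by rw [hcx]
          _ = σ (w ^ m) * (σ v) ^ k := by rw [map_mul, map_pow, map_pow]
      have h1 : ∑ k ∈ range (n + 1), σ (w ^ m) * ((σ v) ^ k * B k) = 0 := by
        rw [← h0]
        refine Finset.sum_congr rfl fun k _ => ?_
        simp only [hB]
        by_cases hkm : k ≤ m
        · rw [if_pos hkm, if_pos hkm, hterm k hkm, mul_assoc]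
        · rw [if_neg hkm, if_neg hkm, mul_zero, mul_zero]
      rw [← Finset.mul_sum] at h1
      rcases mul_eq_zero.mp h1 with h | h
      · exact absurd h (by rw [hσ]; exact sig_ne_zero I hI _ (pow_ne_zero _ (Complex.exp_ne_zero _)))
      · exact h
    -- Vandermonde inversion
    set d : ℝ := Real.pi / (2 * (n + 1)) with hd
    have hdpos : 0 < d := by rw [hd]; positivity
    set vv : Fin (n + 1) → ℂ := fun t => Complex.exp ((-2 * ((t : ℕ) * d) : ℝ) * Complex.I)
      with hvv
    have hvvinj : Function.Injective vv := by
      intro s t hst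
      simp only [hvv] at hst
      rw [Complex.exp_eq_exp_iff_exists_int] at hst
      obtain ⟨N, hN⟩ := hst
      have hN' : ((-2 * ((s : ℕ) * d) : ℝ) : ℂ)
          = ((-2 * ((t : ℕ) * d) + (N : ℝ) * (2 * Real.pi) : ℝ) : ℂ) := by
        apply mul_right_cancel₀ Complex.I_ne_zero
        rw [hN]
        push_cast
        ring
      have hre : (-2 * ((s : ℕ) * d) : ℝ) = -2 * ((t : ℕ) * d) + (N : ℝ) * (2 * Real.pi) := by
        exact_mod_cast hN'
      have hs := s.isLt
      have ht := t.isLt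
      have hpi := Real.pi_pos
      have hsle : ((s : ℕ) : ℝ) ≤ n := by exact_mod_cast Nat.le_of_lt_succ hs
      have htle : ((t : ℕ) : ℝ) ≤ n := by exact_mod_cast Nat.le_of_lt_succ ht
      have hsge : (0:ℝ) ≤ ((s : ℕ) : ℝ) := by positivity
      have htge : (0:ℝ) ≤ ((t : ℕ) : ℝ) := by positivity
      have hdn : d * (n : ℝ) < Real.pi := by
        rw [hd]
        rw [div_mul_eq_mul_div, div_lt_iff₀ (by positivity)]
        nlinarith
      have hNzero : N = 0 := by
        by_contra hN0
        have h1 : (1 : ℝ) ≤ |(N : ℝ)| := by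
          have h1' := Int.one_le_abs (z := N) hN0
          calc (1:ℝ) = ((1:ℤ):ℝ) := by norm_num
            _ ≤ ((|N| : ℤ) : ℝ) := by exact_mod_cast h1'
            _ = |(N:ℝ)| := by push_cast; rfl
        rcases abs_cases (N : ℝ) with ⟨hc, _⟩ | ⟨hc, _⟩ <;>
          nlinarith [mul_le_mul_of_nonneg_right hsle hdpos.le,
            mul_le_mul_of_nonneg_right htle hdpos.le,
            mul_nonneg hsge hdpos.le, mul_nonneg htge hdpos.le]
      rw [hNzero] at hre
      simp only [Int.cast_zero, zero_mul, add_zero] at hre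
      have hst' : ((s : ℕ) : ℝ) = ((t : ℕ) : ℝ) := by
        have := mul_left_cancel₀ (by norm_num : (-2 : ℝ) ≠ 0) hre
        exact mul_right_cancel₀ hdpos.ne' this
      exact Fin.ext (by exact_mod_cast hst')
    set V : Matrix (Fin (n + 1)) (Fin (n + 1)) ℂ := Matrix.vandermonde vv with hV
    have hdet : V.det ≠ 0 := by
      rw [hV, Matrix.det_vandermonde]
      apply Finset.prod_ne_zero_iff.mpr
      intro i _
      apply Finset.prod_ne_zero_iff.mpr
      intro j hj
      rw [Finset.mem_Ioi] at hj
      exact sub_ne_zero.mpr fun h => (ne_of_gt hj) (hvvinj h)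
    have hinv : V⁻¹ * V = 1 := Matrix.nonsing_inv_mul V (Ne.isUnit hdet)
    set k₀' : Fin (n + 1) := ⟨k₀, Nat.lt_succ_of_le hk₀⟩ with hk₀'
    have hBk : ∑ k : Fin (n + 1), σ ((1 : Matrix (Fin (n+1)) (Fin (n+1)) ℂ) k₀' k) * B k
        = B k₀ := by
      rw [Finset.sum_eq_single k₀'
        (fun b _ hb => by rw [Matrix.one_apply_ne' hb, map_zero, zero_mul])
        (fun h => absurd (Finset.mem_univ k₀') h)]
      rw [Matrix.one_apply_eq, map_one, one_mul]
    have hzero : ∀ t : Fin (n + 1), ∑ k : Fin (n + 1), σ (V t k) * B (k : ℕ) = 0 := by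
      intro t
      have hk2 := hkey ((t : ℕ) * d)
      rw [← Fin.sum_univ_eq_sum_range
        (fun k => (σ (Complex.exp ((-2 * ((t : ℕ) * d) : ℝ) * Complex.I))) ^ k * B k)
        (n + 1)] at hk2
      rw [← hk2]
      refine Finset.sum_congr rfl fun k _ => ?_
      rw [hV, Matrix.vandermonde_apply, map_pow]
    have hswap : B k₀ = 0 := by
      have hc1 : B k₀ = ∑ k : Fin (n + 1), σ ((V⁻¹ * V) k₀' k) * B (k : ℕ) := by
        rw [hinv]; exact hBk.symm
      have hc2 : ∀ k : Fin (n + 1), σ ((V⁻¹ * V) k₀' k) * B (k : ℕ)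
          = ∑ t : Fin (n + 1), σ (V⁻¹ k₀' t) * (σ (V t k) * B (k : ℕ)) := by
        intro k
        rw [Matrix.mul_apply, map_sum, Finset.sum_mul]
        refine Finset.sum_congr rfl fun t _ => ?_
        rw [map_mul, mul_assoc]
      calc B k₀ = ∑ k : Fin (n + 1), ∑ t : Fin (n + 1),
            σ (V⁻¹ k₀' t) * (σ (V t k) * B (k : ℕ)) := by
            rw [hc1]; exact Finset.sum_congr rfl fun k _ => hc2 k
        _ = ∑ t : Fin (n + 1), ∑ k : Fin (n + 1),
            σ (V⁻¹ k₀' t) * (σ (V t k) * B (k : ℕ)) := Finset.sum_comm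
        _ = ∑ t : Fin (n + 1), σ (V⁻¹ k₀' t) *
            (∑ k : Fin (n + 1), σ (V t k) * B (k : ℕ)) := by
            exact Finset.sum_congr rfl fun t _ => (Finset.mul_sum _ _ _).symm
        _ = 0 := by
            refine Finset.sum_eq_zero fun t _ => ?_
            rw [hzero t, mul_zero]
    have hfin : B k₀ = A k₀ j₀ := by
      simp only [hB]
      rw [if_pos (by omega : k₀ ≤ m), show m - k₀ = j₀ by omega]
    rw [hfin] at hswap
    exact hswap
  -- Step 5 : conclude
  have hφ0 : ∀ k, k ≤ n → ∀ q, φ k q = 0 := by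
    intro k hk q
    have h1 := hA_rep k hk q
    have h3 : HasSum (fun _ : ℕ => (0 : ℍ[ℝ])) (φ k q) := by
      refine h1.congr_fun fun j => ?_
      rw [hA0 k hk j, mul_zero]
    exact h3.unique hasSum_zero
  refine ⟨fun q => ?_, hφ0⟩
  rw [hf q]
  apply Finset.sum_eq_zero
  intro k hk
  rw [hφ0 k (Finset.mem_range_succ_iff.mp hk) q, mul_zero]
end
end

section
/- Commutativity of the star product under commuting coefficients: let m, n ∈ ℕ and let a_{l,j} (l ∈ ℕ, 0 ≤ j ≤ m) and b_{l,k} (l ∈ ℕ, 0 ≤ k ≤ n) be quaternions with ∑_l |a_{l,j}|·r^l < ∞ and ∑_l |b_{l,k}|·r^l < ∞ for every r > 0, defining f(q) = ∑_{j=0}^{m} q̄^j·∑_l q^l·a_{l,j} and g(q) = ∑_{k=0}^{n} q̄^k·∑_l q^l·b_{l,k}. If a_{l,j}·b_{r,k} = b_{r,k}·a_{l,j} for all indices l, j, r, k, then (f ⋆^L_{sp} g)(q) = (g ⋆^L_{sp} f)(q) for every q ∈ ℍ. -/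
open scoped Quaternion

noncomputable section

/-- The left star product of the S-polyregular functions
`f(q) = ∑_{j=0}^m q̄^j ∑_l q^l a_{l,j}` and `g(q) = ∑_{k=0}^n q̄^k ∑_l q^l b_{l,k}`:
`(f ⋆^L_{sp} g)(q) = ∑_{j=0}^m ∑_{k=0}^n q̄^{j+k} ∑_s q^s (∑_{l=0}^s a_{l,j} b_{s−l,k})`. -/
def starProd (m n : ℕ) (a b : ℕ → ℕ → ℍ[ℝ]) (q : ℍ[ℝ]) : ℍ[ℝ] :=
  ∑ j ∈ Finset.range (m + 1), ∑ k ∈ Finset.range (n + 1),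
    (star q) ^ (j + k) *
      ∑' s : ℕ, q ^ s * ∑ l ∈ Finset.range (s + 1), a l j * b (s - l) k

/-- if all the coefficients of `f` and `g` commute pairwise, then
`f ⋆^L_{sp} g = g ⋆^L_{sp} f`. -/
theorem stmt7 (m n : ℕ) (a b : ℕ → ℕ → ℍ[ℝ])
    (ha : ∀ j, j ≤ m → ∀ r : ℝ, 0 < r → Summable fun l : ℕ => ‖a l j‖ * r ^ l)
    (hb : ∀ k, k ≤ n → ∀ r : ℝ, 0 < r → Summable fun l : ℕ => ‖b l k‖ * r ^ l)
    (hcomm : ∀ l j r k : ℕ, a l j * b r k = b r k * a l j) :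
    ∀ q : ℍ[ℝ], starProd m n a b q = starProd n m b a q := by
  intro q
  unfold starProd
  rw [Finset.sum_comm]
  refine Finset.sum_congr rfl fun k _ => Finset.sum_congr rfl fun j _ => ?_
  rw [Nat.add_comm k j]
  congr 1
  refine tsum_congr fun s => ?_
  congr 1
  rw [← Finset.sum_range_reflect fun l => b l k * a (s - l) j]
  refine Finset.sum_congr rfl fun l hl => ?_
  simp only [Finset.mem_range] at hl
  have h1 : s + 1 - 1 - l = s - l := by omega
  have h2 : s - (s - l) = l := by omega
  rw [h1, h2, hcomm]
end
end

section
/- Fix q ∈ ℍ and let S_1 : ℍ → ℍ be the S-polyregular function of level 1 given by S_1(p) = p̄·(p−q) − (p−q)·q̄, i.e. in decomposed form S_1(p) = p̄·(p·1 + (−q)) + (p·(−q̄) + q·q̄), and for k ≥ 1 let S_k := S_1 ⋆^L_{sp} S_1 ⋆^L_{sp} ⋯ ⋆^L_{sp} S_1 (k factors, iterated left star product in the variable p). Then for every k ≥ 1 and every p ∈ ℍ: S_k(p) = ∑_{j=0}^{k} (−1)^j·binomial(k,j)·p̄^{k−j}·(∑_{i=0}^{k} binomial(k,i)·p^i·(−q)^{k−i})·q̄^j.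 -/
open scoped Quaternion

noncomputable section

/-- Coefficient array of the left star product of two S-polyregular functions given by
their coefficient arrays: if `f(p) = ∑_t p̄^t ∑_s p^s a_{s,t}`, the product array is
`c_{s,t} = ∑_{j+k=t} ∑_{l=0}^s a_{l,j} b_{s−l,k}`. -/
def coeffMul (a b : ℕ → ℕ → ℍ[ℝ]) : ℕ → ℕ → ℍ[ℝ] :=
  fun s t => ∑ j ∈ Finset.range (t + 1), ∑ l ∈ Finset.range (s + 1),
    a l j * b (s - l) (t - j)

/-- Evaluation of the S-polyregular function of level `n` with coefficient array `a`:
`p ↦ ∑_{t=0}^n p̄^t ∑_s p^s a_{s,t}`. -/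
def evalArr (n : ℕ) (a : ℕ → ℕ → ℍ[ℝ]) (p : ℍ[ℝ]) : ℍ[ℝ] :=
  ∑ t ∈ Finset.range (n + 1), (star p) ^ t * ∑' s : ℕ, p ^ s * a s t

/-- Coefficient array of `S_1(p) = p̄·(p−q) − (p−q)·q̄`: for `p̄^1` the coefficients
`a_{0,1} = −q`, `a_{1,1} = 1`; for `p̄^0` the coefficients `a_{0,0} = q·q̄`, `a_{1,0} = −q̄`. -/
def S1arr (q : ℍ[ℝ]) : ℕ → ℕ → ℍ[ℝ] := fun s t =>
  if s = 0 ∧ t = 1 then -q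
  else if s = 1 ∧ t = 1 then 1
  else if s = 0 ∧ t = 0 then q * star q
  else if s = 1 ∧ t = 0 then -star q
  else 0

/-- Candidate closed form for the coefficient array of `S_k`. -/
def cArr (q : ℍ[ℝ]) (k : ℕ) : ℕ → ℕ → ℍ[ℝ] := fun s t =>
  ((k.choose s : ℝ) * (k.choose t : ℝ)) • ((-q) ^ (k - s) * (-star q) ^ (k - t))

lemma sumCollapseAux {M : Type*} [AddCommMonoid M] (n : ℕ) (f : ℕ → M)
    (h : ∀ m, m + 2 ≤ n → f m = 0) :
    ∑ l ∈ Finset.range (n + 1), f l = f n + (if 1 ≤ n then f (n - 1) else 0) := by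
  cases n with
  | zero => simp
  | succ n =>
      rw [Finset.sum_range_succ, Finset.sum_range_succ]
      have h0 : ∑ l ∈ Finset.range n, f l = 0 :=
        Finset.sum_eq_zero fun l hl => h l (by have := Finset.mem_range.mp hl; omega)
      rw [h0]
      simp [add_comm]

lemma S1arr_eq_zero (q : ℍ[ℝ]) {m r : ℕ} (h : 2 ≤ m ∨ 2 ≤ r) : S1arr q m r = 0 := by
  rcases h with h | h <;> simp only [S1arr] <;>
    repeat' rw [if_neg (by omega)]

lemma coeffMul_S1 (q : ℍ[ℝ]) (a : ℕ → ℕ → ℍ[ℝ]) (s t : ℕ) :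
    coeffMul a (S1arr q) s t =
      (a s t * (q * star q) + (if 1 ≤ s then a (s - 1) t * (-star q) else 0))
      + (if 1 ≤ t then
          a s (t - 1) * (-q) + (if 1 ≤ s then a (s - 1) (t - 1) * 1 else 0)
        else 0) := by
  unfold coeffMul
  rw [sumCollapseAux t _ (fun j hj => Finset.sum_eq_zero fun l _ => by
    rw [S1arr_eq_zero q (Or.inr (by omega)), mul_zero])]
  congr 1
  · rw [sumCollapseAux s _ (fun l hl => by
      rw [S1arr_eq_zero q (Or.inl (by omega)), mul_zero])]
    have h00 : S1arr q 0 (t - t) = q * star q := by simp [S1arr]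
    rw [show s - s = 0 by omega, h00]
    congr 1
    split <;> rename_i h
    · rw [show s - (s-1) = 1 by omega]; simp [S1arr]
    · rfl
  · split <;> rename_i ht
    · rw [sumCollapseAux s _ (fun l hl => by
        rw [S1arr_eq_zero q (Or.inl (by omega)), mul_zero])]
      rw [show s - s = 0 by omega, show t - (t-1) = 1 by omega]
      have h01 : S1arr q 0 1 = -q := by simp [S1arr]
      rw [h01]
      congr 1
      split <;> rename_i hs
      · rw [show s - (s-1) = 1 by omega]; simp [S1arr]
      · rfl
    · rfl

lemma cArr_one (q : ℍ[ℝ]) : cArr q 1 = S1arr q := by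
  funext s t
  unfold cArr S1arr
  match s, t with
  | 0, 0 => simp [neg_mul_neg]
  | 0, 1 => simp
  | 1, 0 => simp
  | 1, 1 => simp
  | 0, (r+2) => simp [Nat.choose_eq_zero_of_lt (by omega : 1 < r + 2)]
  | 1, (r+2) => simp [Nat.choose_eq_zero_of_lt (by omega : 1 < r + 2)]
  | (m+2), r => simp [Nat.choose_eq_zero_of_lt (by omega : 1 < m + 2)]

lemma commute_negq (q : ℍ[ℝ]) : Commute (-q) (-(star q)) := by
  have h : star q * q = q * star q := by
    rw [Quaternion.self_mul_star, Quaternion.star_mul_self]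
  simpa [Commute, SemiconjBy, neg_mul_neg] using h.symm

lemma fix_left (k s : ℕ) (r : ℝ) (x w : ℍ[ℝ]) :
    ((k.choose s : ℝ) * r) • (x ^ (k - s + 1) * w) =
      ((k.choose s : ℝ) * r) • (x ^ (k + 1 - s) * w) := by
  rcases le_or_gt s k with h | h
  · rw [show k - s + 1 = k + 1 - s by omega]
  · simp [Nat.choose_eq_zero_of_lt h]

lemma fix_right (k t : ℕ) (r : ℝ) (u y : ℍ[ℝ]) :
    (r * (k.choose t : ℝ)) • (u * y ^ (k - t + 1)) =
      (r * (k.choose t : ℝ)) • (u * y ^ (k + 1 - t)) := by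
  rcases le_or_gt t k with h | h
  · rw [show k - t + 1 = k + 1 - t by omega]
  · simp [Nat.choose_eq_zero_of_lt h]

lemma pow_mul_pow_mul_left' (x y : ℍ[ℝ]) (h : Commute x y) (a b : ℕ) :
    x ^ a * y ^ b * x = x ^ (a + 1) * y ^ b := by
  have hyx : y ^ b * x = x * y ^ b := (h.symm.pow_left b).eq
  rw [mul_assoc, hyx, ← mul_assoc, ← pow_succ x a]

lemma pow_mul_pow_mul_right' (x y : ℍ[ℝ]) (a b : ℕ) :
    x ^ a * y ^ b * y = x ^ a * y ^ (b + 1) := by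
  rw [mul_assoc, ← pow_succ]

section termLemmas

variable (q : ℍ[ℝ]) (k : ℕ)

lemma termA (s t : ℕ) :
    cArr q k s t * (q * star q) =
      ((k.choose s : ℝ) * (k.choose t : ℝ)) • ((-q) ^ (k+1-s) * (-star q) ^ (k+1-t)) := by
  have hc := commute_negq q
  unfold cArr
  rw [smul_mul_assoc, show q * star q = (-q) * (-star q) by rw [neg_mul_neg],
    ← mul_assoc, pow_mul_pow_mul_left' _ _ hc, pow_mul_pow_mul_right',
    fix_left, fix_right]

lemma termB (s t : ℕ) (hs : 1 ≤ s) :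
    cArr q k (s-1) t * (-star q) =
      ((k.choose (s-1) : ℝ) * (k.choose t : ℝ)) • ((-q) ^ (k+1-s) * (-star q) ^ (k+1-t)) := by
  unfold cArr
  rw [smul_mul_assoc, pow_mul_pow_mul_right', show k - (s-1) = k + 1 - s by omega,
    fix_right]

lemma termC (s t : ℕ) (ht : 1 ≤ t) :
    cArr q k s (t-1) * (-q) =
      ((k.choose s : ℝ) * (k.choose (t-1) : ℝ)) • ((-q) ^ (k+1-s) * (-star q) ^ (k+1-t)) := by
  have hc := commute_negq q
  unfold cArr
  rw [smul_mul_assoc, pow_mul_pow_mul_left' _ _ hc, show k - (t-1) = k + 1 - t by omega,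
    fix_left]

lemma termD_s8 (s t : ℕ) (hs : 1 ≤ s) (ht : 1 ≤ t) :
    cArr q k (s-1) (t-1) * 1 =
      ((k.choose (s-1) : ℝ) * (k.choose (t-1) : ℝ)) • ((-q) ^ (k+1-s) * (-star q) ^ (k+1-t)) := by
  unfold cArr
  rw [mul_one, show k - (s-1) = k + 1 - s by omega, show k - (t-1) = k + 1 - t by omega]

end termLemmas

lemma step (q : ℍ[ℝ]) (k : ℕ) : coeffMul (cArr q k) (S1arr q) = cArr q (k + 1) := by
  funext s t
  rw [coeffMul_S1]
  show _ = ((((k+1).choose s : ℕ) : ℝ) * (((k+1).choose t : ℕ) : ℝ)) •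
      ((-q) ^ (k+1-s) * (-star q) ^ (k+1-t))
  match s, t with
  | 0, 0 =>
      rw [if_neg (by omega : ¬ (1:ℕ) ≤ 0), if_neg (by omega : ¬ (1:ℕ) ≤ 0), add_zero, add_zero,
        termA]
      simp
  | 0, (t'+1) =>
      rw [if_neg (by omega : ¬ (1:ℕ) ≤ 0), if_neg (by omega : ¬ (1:ℕ) ≤ 0), add_zero, add_zero,
        if_pos (by omega : (1:ℕ) ≤ t'+1), termA, termC q k 0 (t'+1) (by omega)]
      rw [← add_smul]
      congr 1
      push_cast [Nat.choose_succ_succ, Nat.choose_zero_right]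
      ring
  | (s'+1), 0 =>
      rw [if_neg (by omega : ¬ (1:ℕ) ≤ 0), add_zero, if_pos (by omega : (1:ℕ) ≤ s'+1),
        termA, termB q k (s'+1) 0 (by omega)]
      rw [← add_smul]
      congr 1
      push_cast [Nat.choose_succ_succ, Nat.choose_zero_right]
      ring
  | (s'+1), (t'+1) =>
      rw [if_pos (by omega : (1:ℕ) ≤ s'+1), if_pos (by omega : (1:ℕ) ≤ t'+1),
        if_pos (by omega : (1:ℕ) ≤ s'+1),
        termA, termB q k (s'+1) (t'+1) (by omega), termC q k (s'+1) (t'+1) (by omega),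
        termD_s8 q k (s'+1) (t'+1) (by omega) (by omega)]
      rw [← add_smul, ← add_smul, ← add_smul]
      congr 1
      push_cast [Nat.choose_succ_succ, Nat.choose_zero_right]
      ring

lemma cArr_zero_of_gt (q : ℍ[ℝ]) (k : ℕ) {s : ℕ} (h : k < s) (t : ℕ) : cArr q k s t = 0 := by
  simp [cArr, Nat.choose_eq_zero_of_lt h]

/-- for the iterated star power `S_k = S_1 ⋆^L_{sp} ⋯ ⋆^L_{sp} S_1` (k factors),
`S_k(p) = ∑_{j=0}^k (−1)^j C(k,j) p̄^{k−j} (∑_{i=0}^k C(k,i) p^i (−q)^{k−i}) q̄^j`. -/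
theorem stmt8 (q : ℍ[ℝ]) (k : ℕ) (hk : 1 ≤ k) :
    ∀ p : ℍ[ℝ],
      evalArr k ((fun c => coeffMul c (S1arr q))^[k - 1] (S1arr q)) p =
        ∑ j ∈ Finset.range (k + 1),
          ((-1 : ℝ) ^ j * (k.choose j : ℝ)) •
            ((star p) ^ (k - j) *
              (∑ i ∈ Finset.range (k + 1), (k.choose i : ℝ) • (p ^ i * (-q) ^ (k - i))) *
              (star q) ^ j) := by
  intro p
  have harr : (fun c => coeffMul c (S1arr q))^[k-1] (S1arr q) = cArr q k := by
    obtain ⟨k', rfl⟩ : ∃ k', k = k' + 1 := ⟨k - 1, by omega⟩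
    clear hk
    simp only [Nat.add_sub_cancel]
    induction k' with
    | zero => simpa using (cArr_one q).symm
    | succ n ih => rw [Function.iterate_succ_apply', ih, step]
  rw [harr]
  unfold evalArr
  have htsum : ∀ t : ℕ, (∑' s : ℕ, p ^ s * cArr q k s t)
      = ∑ s ∈ Finset.range (k+1), p ^ s * cArr q k s t := by
    intro t
    refine tsum_eq_sum (fun b hb => ?_)
    rw [cArr_zero_of_gt q k (by simpa using Finset.mem_range.not.mp hb) t, mul_zero]
  simp only [htsum]
  conv_rhs => rw [← Finset.sum_range_reflect]
  refine Finset.sum_congr rfl (fun t ht => ?_)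
  have ht' : t ≤ k := by have := Finset.mem_range.mp ht; omega
  rw [show k + 1 - 1 - t = k - t by omega, show k - (k - t) = t by omega,
    Nat.choose_symm ht']
  -- termwise identity
  have hY : (-star q : ℍ[ℝ]) ^ (k - t) = ((-1 : ℝ) ^ (k - t)) • (star q) ^ (k - t) := by
    rw [← smul_pow, neg_one_smul]
  rw [Finset.mul_sum]
  conv_rhs => rw [Finset.mul_sum, Finset.sum_mul, Finset.smul_sum]
  refine Finset.sum_congr rfl (fun s hs => ?_)
  unfold cArr
  rw [hY]
  simp only [smul_smul, mul_smul_comm, smul_mul_assoc]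
  congr 1
  · ring
  · simp [mul_assoc]
end
end

section
/- Pointwise evaluation bound on the S-polyregular Bargmann space of second kind: let k ∈ ℕ and let (c_j)_{j∈ℕ} be a sequence in ℍ with ∑_{j=0}^∞ j!·|c_j|² < ∞. Then for every q ∈ ℍ the series g(q) = ∑_{j=0}^∞ H^Q_{j,k}(q,q̄)·c_j converges absolutely and satisfies |g(q)| ≤ e^{|q|²/2} · (k!·∑_{j=0}^∞ j!·|c_j|²)^{1/2}. -/
open scoped Quaternion

noncomputable section

/-- The quaternionic Hermite polynomial `H^Q_{m,n}(q,q̄)`. -/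
def HQ (m n : ℕ) (q qb : ℍ[ℝ]) : ℍ[ℝ] :=
  ((m.factorial : ℝ) * (n.factorial : ℝ)) •
    ∑ j ∈ Finset.range (min m n + 1),
      ((-1 : ℝ) ^ j / ((j.factorial : ℝ) * ((m - j).factorial : ℝ) * ((n - j).factorial : ℝ))) •
        (q ^ (m - j) * qb ^ (n - j))

namespace Stmt10Aux
open Finset

variable (q : ℍ[ℝ])

lemma nat_id (m j : ℕ) : (j+1) * Nat.choose m (j+1) = m * Nat.choose (m-1) j := by
  cases m with
  | zero => simp
  | succ m' =>
    simpa [Nat.succ_eq_add_one, mul_comm] using (Nat.add_one_mul_choose_eq m' j).symm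

def co (m n j : ℕ) : ℝ := (-1 : ℝ) ^ j * ((j.factorial * (m.choose j * n.choose j) : ℕ) : ℝ)

def hq (m n : ℕ) : ℍ[ℝ] :=
  ∑ j ∈ Finset.range (n + 1), co m n j • (q ^ (m - j) * (star q) ^ (n - j))

lemma co_rec (m n j : ℕ) :
    co m (n+1) (j+1) + (m:ℝ) * co (m-1) n j = co m n (j+1) := by
  unfold co
  have h1 : (n+1).choose (j+1) = n.choose j + n.choose (j+1) := Nat.choose_succ_succ n j
  have h2' : ((j:ℝ)+1) * m.choose (j+1) = (m:ℝ) * (m-1).choose j := by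
    exact_mod_cast nat_id m j
  push_cast [h1, Nat.factorial_succ]
  linear_combination (-(-1:ℝ)^j * (j.factorial : ℝ) * (n.choose j : ℝ)) * h2'

lemma co_symm (m n j : ℕ) : co m n j = co n m j := by unfold co; ring_nf

lemma co_zero_of_gt {n j : ℕ} (h : n < j) (m : ℕ) : co m n j = 0 := by
  unfold co; rw [Nat.choose_eq_zero_of_lt h]; simp

lemma co_zero_of_gt' {m j : ℕ} (h : m < j) (n : ℕ) : co m n j = 0 := by
  rw [co_symm]; exact co_zero_of_gt h n

lemma commute_star_self : Commute q (star q) := by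
  unfold Commute SemiconjBy
  rw [Quaternion.self_mul_star, Quaternion.star_mul_self]

lemma commute_hq (a : ℍ[ℝ]) (ha : Commute a q) (ha' : Commute a (star q)) (m n : ℕ) :
    Commute a (hq q m n) := by
  apply Commute.sum_right
  intro j _
  exact ((ha.pow_right _).mul_right (ha'.pow_right _)).smul_right _

lemma hq_eq_range (m n N : ℕ) (h : n + 1 ≤ N) :
    hq q m n = ∑ j ∈ Finset.range N, co m n j • (q ^ (m - j) * (star q) ^ (n - j)) := by
  apply Finset.sum_subset (Finset.range_subset_range.mpr h)
  intro j _ hj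
  rw [co_zero_of_gt (by simpa using hj), zero_smul]

lemma hq_zero_right (m : ℕ) : hq q m 0 = q ^ m := by
  simp [hq, co]

lemma hq_zero_left (n : ℕ) : hq q 0 n = (star q) ^ n := by
  unfold hq
  rw [Finset.sum_eq_single 0]
  · simp [co]
  · intro j _ hj
    rw [co_zero_of_gt' (Nat.pos_of_ne_zero hj), zero_smul]
  · simp

lemma star_hq (m n : ℕ) : star (hq q m n) = hq q n m := by
  rw [hq_eq_range q m n (m + n + 1) (by omega), hq_eq_range q n m (m + n + 1) (by omega)]
  rw [star_sum]
  apply Finset.sum_congr rfl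
  intro j _
  rw [Quaternion.star_smul, star_mul, star_pow, star_pow, star_star, co_symm]


lemma hq_rec_right (m n : ℕ) :
    hq q m (n+1) = star q * hq q m n - (m:ℝ) • hq q (m-1) n := by
  have hsq : ∀ a b : ℕ, star q * (q ^ a * star q ^ b) = q ^ a * star q ^ (b+1) := by
    intro a b
    rw [← mul_assoc, ((commute_star_self q).symm.pow_right a).eq, mul_assoc, ← pow_succ']
  have hR1 : star q * hq q m n
      = ∑ j ∈ Finset.range (n+1), co m n j • (q ^ (m-j) * (star q) ^ (n+1-j)) := by
    rw [hq, Finset.mul_sum]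
    refine Finset.sum_congr rfl fun j hj => ?_
    have hj' := Finset.mem_range.mp hj
    have e : n - j + 1 = n + 1 - j := by omega
    rw [mul_smul_comm, hsq, e]
  have hR2 : (m:ℝ) • hq q (m-1) n
      = ∑ j ∈ Finset.range (n+1), ((m:ℝ) * co (m-1) n j) • (q ^ (m-1-j) * (star q) ^ (n-j)) := by
    rw [hq, Finset.smul_sum]
    refine Finset.sum_congr rfl fun j hj => ?_
    rw [smul_smul]
  rw [eq_sub_iff_add_eq, hR1, hR2, hq]
  have hGext : ∑ j ∈ Finset.range (n+2), co m n j • (q ^ (m-j) * (star q) ^ (n+1-j))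
      = ∑ j ∈ Finset.range (n+1), co m n j • (q ^ (m-j) * (star q) ^ (n+1-j)) := by
    rw [Finset.sum_range_succ, co_zero_of_gt (Nat.lt_succ_self n), zero_smul, add_zero]
  rw [← hGext, Finset.sum_range_succ' (fun j => co m (n+1) j • (q ^ (m-j) * (star q) ^ (n+1-j))),
    Finset.sum_range_succ' (fun j => co m n j • (q ^ (m-j) * (star q) ^ (n+1-j)))]
  have h0 : co m (n+1) 0 = co m n 0 := by simp [co]
  rw [h0, add_right_comm, ← Finset.sum_add_distrib]
  congr 1
  refine Finset.sum_congr rfl fun j hj => ?_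
  have hp1 : m - (j+1) = m - 1 - j := by omega
  have hp2 : n + 1 - (j+1) = n - j := by omega
  rw [hp1, hp2, ← add_smul, co_rec]

lemma hq_rec_left (m a : ℕ) :
    hq q (m+1) (a+1) = hq q m (a+1) * q - ((a:ℝ)+1) • hq q m a := by
  have h := congrArg star (hq_rec_right q (a+1) m)
  rw [star_hq, star_sub, star_mul, star_star, Quaternion.star_smul, star_hq, star_hq] at h
  simpa using h

lemma norm_hq_le (m n : ℕ) :
    ‖hq q m n‖ ≤ (((m:ℝ)+1))^n * 2^n * (max 1 ‖q‖)^(m+n) := by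
  set B := max 1 ‖q‖ with hBdef
  have hB1 : (1:ℝ) ≤ B := le_max_left _ _
  have hqB : ‖q‖ ≤ B := le_max_right _ _
  calc ‖hq q m n‖ ≤ ∑ j ∈ Finset.range (n+1), ‖co m n j • (q ^ (m-j) * (star q) ^ (n-j))‖ :=
        norm_sum_le _ _
    _ ≤ ∑ j ∈ Finset.range (n+1), (((m:ℝ)+1))^n * (n.choose j) * B^(m+n) := by
        refine Finset.sum_le_sum fun j hj => ?_
        have hj' : j ≤ n := Nat.lt_succ_iff.mp (Finset.mem_range.mp hj)
        rw [norm_smul, norm_mul, norm_pow, norm_pow, norm_star]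
        have hco : |co m n j| = ((j.factorial * (m.choose j * n.choose j) : ℕ) : ℝ) := by
          unfold co
          rw [abs_mul, abs_pow, abs_neg, abs_one, one_pow, one_mul, Nat.abs_cast]
        rw [Real.norm_eq_abs, hco, ← pow_add]
        have hqe : ‖q‖ ^ (m - j + (n - j)) ≤ B ^ (m+n) := by
          calc ‖q‖ ^ (m - j + (n - j)) ≤ B ^ (m - j + (n - j)) :=
                pow_le_pow_left₀ (norm_nonneg q) hqB _
            _ ≤ B ^ (m+n) := pow_le_pow_right₀ hB1 (by omega)
        have hcoef : ((j.factorial * (m.choose j * n.choose j) : ℕ) : ℝ)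
            ≤ (((m:ℝ)+1))^n * (n.choose j) := by
          have h1 : j.factorial * (m.choose j * n.choose j)
              = (j.factorial * m.choose j) * n.choose j := by ring
          have h2 : j.factorial * m.choose j ≤ (m+1)^n := by
            calc j.factorial * m.choose j = m.descFactorial j :=
                  (Nat.descFactorial_eq_factorial_mul_choose m j).symm
              _ ≤ m ^ j := Nat.descFactorial_le_pow m j
              _ ≤ (m+1) ^ j := Nat.pow_le_pow_left (Nat.le_succ m) j
              _ ≤ (m+1) ^ n := Nat.pow_le_pow_right (Nat.succ_pos m) hj'
          have : j.factorial * (m.choose j * n.choose j) ≤ (m+1)^n * n.choose j := by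
            rw [h1]; exact Nat.mul_le_mul_right _ h2
          calc ((j.factorial * (m.choose j * n.choose j) : ℕ) : ℝ)
              ≤ (((m+1)^n * n.choose j : ℕ) : ℝ) := by exact_mod_cast this
            _ = (((m:ℝ)+1))^n * (n.choose j) := by push_cast; ring
        have h0 : (0:ℝ) ≤ ((j.factorial * (m.choose j * n.choose j) : ℕ) : ℝ) := by positivity
        exact mul_le_mul hcoef hqe (by positivity) (by positivity)
    _ = (((m:ℝ)+1))^n * 2^n * B^(m+n) := by
        rw [← Finset.sum_mul, ← Finset.mul_sum]
        have : ∑ j ∈ Finset.range (n+1), ((n.choose j : ℕ) : ℝ) = 2^n := by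
          rw [← Nat.cast_sum]
          rw [Nat.sum_range_choose]
          push_cast; ring
        rw [this]

lemma summable_aux (K : ℕ) (y : ℝ) (hy : 0 ≤ y) :
    Summable (fun m : ℕ => (((m:ℝ)+1))^K * y^m / m.factorial) := by
  have hsum : Summable (fun m : ℕ => ((K.factorial : ℝ) * Real.exp 1) *
      ((Real.exp 1 * y)^m / m.factorial)) :=
    (Real.summable_pow_div_factorial (Real.exp 1 * y)).mul_left _
  refine Summable.of_nonneg_of_le (fun m => by positivity) (fun m => ?_) hsum
  have key : (((m:ℝ)+1))^K ≤ (K.factorial : ℝ) * Real.exp ((m:ℝ)+1) := by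
    have h1 : (((m:ℝ)+1))^K / K.factorial ≤ Real.exp ((m:ℝ)+1) := by
      have h2 : (((m:ℝ)+1))^K / K.factorial
          ≤ ∑ i ∈ Finset.range (K+1), (((m:ℝ)+1))^i / i.factorial := by
        refine Finset.single_le_sum (f := fun i => (((m:ℝ)+1))^i / (i.factorial:ℝ))
          (fun i _ => by positivity) (Finset.self_mem_range_succ K)
      exact h2.trans (Real.sum_le_exp_of_nonneg (by positivity) _)
    rw [div_le_iff₀ (by positivity)] at h1
    linarith [h1]
  have hexp : Real.exp ((m:ℝ)+1) = Real.exp 1 * (Real.exp 1)^m := by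
    rw [← Real.exp_nat_mul, ← Real.exp_add]
    ring_nf
  rw [div_le_iff₀ (by positivity), ← sub_nonneg]
  have expand : (K.factorial : ℝ) * Real.exp 1 * ((Real.exp 1 * y)^m / m.factorial) * m.factorial
      = (K.factorial : ℝ) * Real.exp 1 * (Real.exp 1)^m * y^m := by
    rw [mul_pow]
    field_simp
  rw [expand]
  have : (((m:ℝ)+1))^K * y^m ≤ (K.factorial : ℝ) * Real.exp 1 * (Real.exp 1)^m * y^m := by
    refine mul_le_mul_of_nonneg_right ?_ (by positivity)
    calc (((m:ℝ)+1))^K ≤ (K.factorial : ℝ) * Real.exp ((m:ℝ)+1) := key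
      _ = (K.factorial : ℝ) * Real.exp 1 * (Real.exp 1)^m := by rw [hexp]; ring
  linarith

lemma summable_hh (a b : ℕ) :
    Summable (fun m : ℕ => ((m.factorial : ℝ))⁻¹ • (hq q m a * star (hq q m b))) := by
  set B := max 1 ‖q‖ with hBdef
  have hB0 : (0:ℝ) < B := lt_of_lt_of_le one_pos (le_max_left _ _)
  have hsum : Summable (fun m : ℕ => (2^(a+b) * B^(a+b)) *
      ((((m:ℝ)+1))^(a+b) * (B^2)^m / m.factorial)) :=
    (summable_aux (a+b) (B^2) (by positivity)).mul_left _
  refine Summable.of_norm_bounded hsum (fun m => ?_)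
  rw [norm_smul, norm_mul, norm_star, Real.norm_eq_abs, abs_inv, Nat.abs_cast]
  calc (((m.factorial:ℕ):ℝ))⁻¹ * (‖hq q m a‖ * ‖hq q m b‖)
      ≤ (((m.factorial:ℕ):ℝ))⁻¹ * (((((m:ℝ)+1))^a * 2^a * B^(m+a)) *
        ((((m:ℝ)+1))^b * 2^b * B^(m+b))) := by
        refine mul_le_mul_of_nonneg_left ?_ (by positivity)
        exact mul_le_mul (norm_hq_le q m a) (norm_hq_le q m b) (norm_nonneg _) (by positivity)
    _ = (2^(a+b) * B^(a+b)) * ((((m:ℝ)+1))^(a+b) * (B^2)^m / m.factorial) := by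
        rw [pow_add B m a, pow_add B m b, pow_add ((m:ℝ)+1), pow_add (2:ℝ), pow_add B a b,
          ← pow_mul B, two_mul, pow_add B m m]
        field_simp

lemma hasSum_step (a : ℕ) {M : ℍ[ℝ]}
    (hM : HasSum (fun m : ℕ => ((m.factorial : ℝ))⁻¹ • (hq q m a * star (hq q m a))) M) :
    HasSum (fun m : ℕ => ((m.factorial : ℝ))⁻¹ • (hq q m (a+1) * star (hq q m (a+1))))
      (((a:ℝ)+1) • M) := by
  have hstar_rec : ∀ m : ℕ, star (hq q m (a+1))
      = star (hq q m a) * q - (m:ℝ) • star (hq q (m-1) a) := by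
    intro m
    rw [hq_rec_right, star_sub, star_mul, star_star, Quaternion.star_smul]
  have hU : Summable (fun m : ℕ => ((m.factorial:ℝ))⁻¹ • (hq q m (a+1) * star (hq q m a))) :=
    summable_hh q (a+1) a
  have hUsum := hU.hasSum
  set U := ∑' m : ℕ, ((m.factorial:ℝ))⁻¹ • (hq q m (a+1) * star (hq q m a)) with hUdef
  have h1 : HasSum (fun m : ℕ => (((m.factorial:ℝ))⁻¹ • (hq q m (a+1) * star (hq q m a))) * q)
      (U * q) := hUsum.mul_right q
  have h2 : HasSum (fun m : ℕ => (((m.factorial:ℝ))⁻¹ • (hq q m (a+1) * star (hq q m a))) * q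
      - ((a:ℝ)+1) • (((m.factorial:ℝ))⁻¹ • (hq q m a * star (hq q m a))))
      (U * q - ((a:ℝ)+1) • M) := h1.sub (hM.const_smul _)
  set w : ℕ → ℍ[ℝ] := fun m =>
    ((m.factorial:ℝ))⁻¹ • ((m:ℝ) • (hq q m (a+1) * star (hq q (m-1) a))) with hwdef
  have hP2 : ∀ m : ℕ, w (m+1)
      = (((m.factorial:ℝ))⁻¹ • (hq q m (a+1) * star (hq q m a))) * q
        - ((a:ℝ)+1) • (((m.factorial:ℝ))⁻¹ • (hq q m a * star (hq q m a))) := by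
    intro m
    have hfac : (((m+1).factorial:ℝ))⁻¹ * ((m:ℝ)+1) = ((m.factorial:ℝ))⁻¹ := by
      rw [Nat.factorial_succ]
      push_cast
      rw [mul_inv]
      field_simp
    have hm1 : (m+1) - 1 = m := rfl
    simp only [hwdef, hm1]
    push_cast
    rw [smul_smul, hfac, hq_rec_left]
    rw [sub_mul, smul_mul_assoc]
    have hqc : (hq q m (a+1) * q) * star (hq q m a) = (hq q m (a+1) * star (hq q m a)) * q := by
      rw [mul_assoc, mul_assoc]
      congr 1
      rw [star_hq]
      exact (commute_hq q q (Commute.refl q) (commute_star_self q) a m).eq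
    rw [hqc, smul_sub, smul_mul_assoc, smul_comm (((m.factorial:ℝ))⁻¹) (((a:ℝ)+1))]
  have h3 : HasSum (fun m : ℕ => w (m+1)) (U * q - ((a:ℝ)+1) • M) := by
    simpa only [hP2] using h2
  have h4 : HasSum w (U * q - ((a:ℝ)+1) • M) := by
    have h0 : w 0 = 0 := by simp [hwdef]
    have := (hasSum_nat_add_iff (f := w) 1).mp h3
    simpa [h0] using this
  have h5 : HasSum (fun m : ℕ =>
      (((m.factorial:ℝ))⁻¹ • (hq q m (a+1) * star (hq q m a))) * q - w m)
      (U * q - (U * q - ((a:ℝ)+1) • M)) := h1.sub h4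
  have hP1 : ∀ m : ℕ, ((m.factorial : ℝ))⁻¹ • (hq q m (a+1) * star (hq q m (a+1)))
      = (((m.factorial:ℝ))⁻¹ • (hq q m (a+1) * star (hq q m a))) * q - w m := by
    intro m
    rw [hstar_rec m, mul_sub, smul_sub, smul_mul_assoc, mul_assoc]
    congr 1
    rw [hwdef]
    simp only []
    rw [mul_smul_comm]
  rw [sub_sub_cancel] at h5
  simpa only [hP1] using h5

lemma hasSum_diag (n : ℕ) :
    HasSum (fun m : ℕ => ((m.factorial : ℝ))⁻¹ • (hq q m n * star (hq q m n)))
      (((n.factorial : ℝ) * Real.exp (‖q‖^2)) • (1 : ℍ[ℝ])) := by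
  induction n with
  | zero =>
    have hexp : HasSum (fun m : ℕ => (‖q‖^2)^m / m.factorial) (Real.exp (‖q‖^2)) := by
      rw [Real.exp_eq_exp_ℝ]
      exact NormedSpace.expSeries_div_hasSum_exp (‖q‖^2)
    have h := hexp.smul_const (1 : ℍ[ℝ])
    have heq : ∀ m : ℕ, ((‖q‖^2)^m / m.factorial) • (1 : ℍ[ℝ])
        = ((m.factorial : ℝ))⁻¹ • (hq q m 0 * star (hq q m 0)) := by
      intro m
      rw [hq_zero_right, star_pow, ← (commute_star_self q).mul_pow,
        Quaternion.self_mul_star, Quaternion.normSq_eq_norm_mul_self]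
      have hcoe : ∀ r : ℝ, (r : ℍ[ℝ]) = r • (1 : ℍ[ℝ]) := by
        intro r
        rw [← mul_one ((r : ℍ[ℝ])), Quaternion.coe_mul_eq_smul]
      rw [← Quaternion.coe_pow, hcoe, smul_smul]
      congr 1
      rw [← sq]
      field_simp
    simp only [heq] at h
    simpa using h
  | succ a ih =>
    have h := hasSum_step q a ih
    have : ((a:ℝ)+1) • (((a.factorial : ℝ) * Real.exp (‖q‖^2)) • (1 : ℍ[ℝ]))
        = (((a+1).factorial : ℝ) * Real.exp (‖q‖^2)) • (1 : ℍ[ℝ]) := by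
      rw [smul_smul, Nat.factorial_succ]
      push_cast
      ring_nf
    rwa [this] at h

lemma hasSum_norm_diag (k : ℕ) :
    HasSum (fun m : ℕ => ((m.factorial : ℝ))⁻¹ * ‖hq q m k‖^2)
      ((k.factorial : ℝ) * Real.exp (‖q‖^2)) := by
  have hcoe : ∀ r : ℝ, (r : ℍ[ℝ]) = r • (1 : ℍ[ℝ]) := by
    intro r
    rw [← mul_one ((r : ℍ[ℝ])), Quaternion.coe_mul_eq_smul]
  have h := hasSum_diag q k
  have hterm : ∀ m : ℕ, ((m.factorial : ℝ))⁻¹ • (hq q m k * star (hq q m k))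
      = (((m.factorial : ℝ))⁻¹ * ‖hq q m k‖^2) • (1 : ℍ[ℝ]) := by
    intro m
    rw [Quaternion.self_mul_star, Quaternion.normSq_eq_norm_mul_self, hcoe, smul_smul, ← sq]
  simp only [hterm] at h
  have h2 := h.map (QuaternionAlgebra.reₗ (-1) 0 (-1) : ℍ[ℝ] →ₗ[ℝ] ℝ) Quaternion.continuous_re
  have h3 : ∀ r : ℝ, (QuaternionAlgebra.reₗ (-1) 0 (-1) : ℍ[ℝ] →ₗ[ℝ] ℝ) (r • (1 : ℍ[ℝ])) = r := by
    intro r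
    simp [QuaternionAlgebra.reₗ]
  simp only [← hcoe] at h
  exact Quaternion.hasSum_coe.mp h

lemma HQ_eq (m n : ℕ) : HQ m n q (star q) = hq q m n := by
  have hrestrict : hq q m n
      = ∑ j ∈ Finset.range (min m n + 1), co m n j • (q ^ (m-j) * (star q) ^ (n-j)) := by
    rw [hq]
    symm
    apply Finset.sum_subset (Finset.range_subset_range.mpr (by omega))
    intro j _ hj
    have hj' : min m n + 1 ≤ j := by simp at hj; omega
    rcases Nat.lt_or_ge n j with h | h
    · rw [co_zero_of_gt h, zero_smul]
    · rw [co_zero_of_gt' (by omega), zero_smul]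
  rw [HQ, hrestrict, Finset.smul_sum]
  refine Finset.sum_congr rfl fun j hj => ?_
  rw [smul_smul]
  congr 1
  have hjm : j ≤ m := by
    have := Finset.mem_range.mp hj; omega
  have hjn : j ≤ n := by
    have := Finset.mem_range.mp hj; omega
  have hmR : ((m.choose j : ℝ)) * j.factorial * (m-j).factorial = m.factorial := by
    exact_mod_cast Nat.choose_mul_factorial_mul_factorial hjm
  have hnR : ((n.choose j : ℝ)) * j.factorial * (n-j).factorial = n.factorial := by
    exact_mod_cast Nat.choose_mul_factorial_mul_factorial hjn
  have hne : ((j.factorial : ℝ) * ((m-j).factorial : ℝ) * ((n-j).factorial : ℝ)) ≠ 0 := by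
    have h1 : ((j.factorial : ℕ) : ℝ) ≠ 0 := Nat.cast_ne_zero.mpr j.factorial_ne_zero
    have h2 : (((m-j).factorial : ℕ) : ℝ) ≠ 0 := Nat.cast_ne_zero.mpr (m-j).factorial_ne_zero
    have h3 : (((n-j).factorial : ℕ) : ℝ) ≠ 0 := Nat.cast_ne_zero.mpr (n-j).factorial_ne_zero
    exact mul_ne_zero (mul_ne_zero h1 h2) h3
  unfold co
  push_cast
  rw [mul_div_assoc', div_eq_iff hne]
  rw [← hmR, ← hnR]
  ring

end Stmt10Aux


/-- pointwise evaluation bound on the S-polyregular Bargmann space of second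
kind: `g(q) = ∑_j H^Q_{j,k}(q,q̄) c_j` converges absolutely and
`|g(q)| ≤ e^{|q|²/2} (k! ∑_j j!|c_j|²)^{1/2}`. -/
theorem stmt10 (k : ℕ) (c : ℕ → ℍ[ℝ])
    (hc : Summable fun j : ℕ => (j.factorial : ℝ) * ‖c j‖ ^ 2) (q : ℍ[ℝ]) :
    Summable (fun j : ℕ => ‖HQ j k q (star q) * c j‖) ∧
      ‖∑' j : ℕ, HQ j k q (star q) * c j‖ ≤
        Real.exp (‖q‖ ^ 2 / 2) *
          Real.sqrt ((k.factorial : ℝ) * ∑' j : ℕ, (j.factorial : ℝ) * ‖c j‖ ^ 2) := by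
  classical
  have hhq : ∀ j : ℕ, ‖HQ j k q (star q) * c j‖ = ‖Stmt10Aux.hq q j k‖ * ‖c j‖ := by
    intro j
    rw [Stmt10Aux.HQ_eq, norm_mul]
  have hS := Stmt10Aux.hasSum_norm_diag q k
  set x := ‖q‖^2 with hxdef
  set T := ∑' j : ℕ, (j.factorial : ℝ) * ‖c j‖^2 with hTdef
  have hT0 : 0 ≤ T := tsum_nonneg (fun j => by positivity)
  have hsqrtexp : Real.sqrt (Real.exp x) = Real.exp (x/2) := by
    rw [show Real.exp x = (Real.exp (x/2))^2 by rw [sq, ← Real.exp_add]; ring_nf]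
    exact Real.sqrt_sq (Real.exp_pos _).le
  have key : ∀ s : Finset ℕ, ∑ j ∈ s, ‖HQ j k q (star q) * c j‖
      ≤ Real.exp (x/2) * Real.sqrt ((k.factorial : ℝ) * T) := by
    intro s
    have CS := Finset.sum_mul_sq_le_sq_mul_sq s
      (fun j => ‖Stmt10Aux.hq q j k‖ / Real.sqrt (j.factorial))
      (fun j => Real.sqrt (j.factorial) * ‖c j‖)
    have hprod : ∀ j : ℕ, (‖Stmt10Aux.hq q j k‖ / Real.sqrt (j.factorial))
        * (Real.sqrt (j.factorial) * ‖c j‖) = ‖Stmt10Aux.hq q j k‖ * ‖c j‖ := by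
      intro j
      have hs : Real.sqrt (j.factorial) ≠ 0 :=
        ne_of_gt (Real.sqrt_pos.mpr (by exact_mod_cast j.factorial_pos))
      field_simp
    have hsq1 : ∀ j : ℕ, (‖Stmt10Aux.hq q j k‖ / Real.sqrt (j.factorial))^2
        = ((j.factorial : ℝ))⁻¹ * ‖Stmt10Aux.hq q j k‖^2 := by
      intro j
      rw [div_pow, Real.sq_sqrt (by positivity)]
      ring
    have hsq2 : ∀ j : ℕ, (Real.sqrt (j.factorial) * ‖c j‖)^2
        = (j.factorial : ℝ) * ‖c j‖^2 := by
      intro j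
      rw [mul_pow, Real.sq_sqrt (by positivity)]
    simp only [hprod, hsq1, hsq2] at CS
    have hb1 : ∑ j ∈ s, ((j.factorial : ℝ))⁻¹ * ‖Stmt10Aux.hq q j k‖^2
        ≤ (k.factorial : ℝ) * Real.exp x :=
      sum_le_hasSum s (fun j _ => by positivity) hS
    have hb2 : ∑ j ∈ s, (j.factorial : ℝ) * ‖c j‖^2 ≤ T :=
      Summable.sum_le_tsum s (fun j _ => by positivity) hc
    have hCS2 : (∑ j ∈ s, ‖Stmt10Aux.hq q j k‖ * ‖c j‖)^2
        ≤ ((k.factorial : ℝ) * Real.exp x) * T := by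
      calc (∑ j ∈ s, ‖Stmt10Aux.hq q j k‖ * ‖c j‖)^2
          ≤ (∑ j ∈ s, ((j.factorial : ℝ))⁻¹ * ‖Stmt10Aux.hq q j k‖^2)
            * ∑ j ∈ s, (j.factorial : ℝ) * ‖c j‖^2 := CS
        _ ≤ ((k.factorial : ℝ) * Real.exp x) * T := by
            apply mul_le_mul hb1 hb2 (Finset.sum_nonneg (fun j _ => by positivity))
              (by positivity)
    have hnn : 0 ≤ ∑ j ∈ s, ‖Stmt10Aux.hq q j k‖ * ‖c j‖ :=
      Finset.sum_nonneg (fun j _ => by positivity)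
    have := Real.sqrt_le_sqrt hCS2
    rw [Real.sqrt_sq hnn] at this
    calc ∑ j ∈ s, ‖HQ j k q (star q) * c j‖
        = ∑ j ∈ s, ‖Stmt10Aux.hq q j k‖ * ‖c j‖ := by
          exact Finset.sum_congr rfl fun j _ => hhq j
      _ ≤ Real.sqrt (((k.factorial : ℝ) * Real.exp x) * T) := this
      _ = Real.exp (x/2) * Real.sqrt ((k.factorial : ℝ) * T) := by
          rw [show ((k.factorial : ℝ) * Real.exp x) * T
              = Real.exp x * ((k.factorial : ℝ) * T) by ring]
          rw [Real.sqrt_mul (Real.exp_pos x).le, hsqrtexp]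
  have hsummable : Summable (fun j : ℕ => ‖HQ j k q (star q) * c j‖) :=
    summable_of_sum_le (fun j => norm_nonneg _) key
  refine ⟨hsummable, ?_⟩
  calc ‖∑' j : ℕ, HQ j k q (star q) * c j‖
      ≤ ∑' j : ℕ, ‖HQ j k q (star q) * c j‖ := norm_tsum_le_tsum_norm hsummable
    _ ≤ Real.exp (x/2) * Real.sqrt ((k.factorial : ℝ) * T) := Summable.tsum_le_of_sum_le hsummable key
end
end
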